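/- arXiv:2309.11391 — 2 statements merged into one kernel-verified Lean document; each statement's English description precedes it below -/
import Mathlib

section
/- Let X be a Banach space. Then Δ_X(ε) = Δ_{B_X}(ε) for all 0 < ε < 1, where B_X is the closed unit ball of X. -/
open Filter Topology
open scoped ZeroAtInfty ENNReal NNReal

/-- Increasing `k`-tuples of naturals: the vertices `[ℕ]^k` of the interlacing graph. -/
def IncTuple (k : ℕ) := {f : Fin k → ℕ // StrictMono f}

/-- `m₁ ≤ n₁ ≤ m₂ ≤ n₂ ≤ ⋯ ≤ m_k ≤ n_k`. -/
def InterLE {k : ℕ} (m n : Fin k → ℕ) : Prop :=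
  (∀ i, m i ≤ n i) ∧ ∀ (i : ℕ) (h : i + 1 < k), n ⟨i, Nat.lt_of_succ_lt h⟩ ≤ m ⟨i + 1, h⟩

/-- The pair `(m, n)` interlaces. -/
def Interlacing {k : ℕ} (m n : Fin k → ℕ) : Prop := InterLE m n ∨ InterLE n m

/-- `m₁ ≤ n₁ < m₂ ≤ n₂ < ⋯ < m_k ≤ n_k`. -/
def StrongInterLE {k : ℕ} (m n : Fin k → ℕ) : Prop :=
  (∀ i, m i ≤ n i) ∧ ∀ (i : ℕ) (h : i + 1 < k), n ⟨i, Nat.lt_of_succ_lt h⟩ < m ⟨i + 1, h⟩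

/-- The pair `(m, n)` is strongly interlacing. -/
def StronglyInterlacing {k : ℕ} (m n : Fin k → ℕ) : Prop :=
  StrongInterLE m n ∨ StrongInterLE n m

/-- The interlacing graph on `[ℕ]^k`. -/
def interGraph (k : ℕ) : SimpleGraph (IncTuple k) where
  Adj m n := m ≠ n ∧ Interlacing m.1 n.1
  symm := ⟨fun _ _ h => ⟨h.1.symm, h.2.symm⟩⟩
  loopless := ⟨fun _ h => h.1 rfl⟩

/-- The interlacing graph metric `d_I`. -/
noncomputable def dI {k : ℕ} (m n : IncTuple k) : ℕ := (interGraph k).dist m n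

/-- All entries of the tuple belong to `L`. -/
def memAll {k : ℕ} (L : Set ℕ) (m : IncTuple k) : Prop := ∀ i, m.1 i ∈ L

/-- `m̄ < n̄`: every entry of `m` is below every entry of `n`. -/
def ordLT {k : ℕ} (m n : IncTuple k) : Prop := ∀ i j, m.1 i < n.1 j

/-- Kalton's `Q(ε, δ)`-property of a metric space. -/
def HasQProp (M : Type*) [MetricSpace M] (ε δ : ℝ) : Prop :=
  ∀ (k : ℕ) (f : IncTuple k → M),
    (∀ m n : IncTuple k, dist (f m) (f n) ≤ δ * dI m n) →
    ∃ L : Set ℕ, L.Infinite ∧ ∀ m n : IncTuple k, memAll L m → memAll L n → ordLT m n →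
      dist (f m) (f n) < ε

/-- The modulus `Δ_M(ε)`. -/
noncomputable def DeltaMod (M : Type*) [MetricSpace M] (ε : ℝ) : ℝ :=
  sSup {δ : ℝ | 0 ≤ δ ∧ HasQProp M ε δ}

/-- The constant `q_M`. -/
noncomputable def qMod (M : Type*) [MetricSpace M] : ℝ :=
  sSup {c : ℝ | 0 ≤ c ∧ ∀ ε : ℝ, 0 < ε → c * ε ≤ DeltaMod M ε}

/-- Boundedness of a map into a metric space. -/
def IsBddMap {α : Type*} {M : Type*} [MetricSpace M] (f : α → M) : Prop :=
  ∃ R : ℝ, ∀ x y, dist (f x) (f y) ≤ R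

/-- Property `Q` with constant `C`: every Lipschitz map on an interlacing graph
concentrates on `[L]^k` up to `C·Lip(f)`. -/
def HasPropQConst (M : Type*) [MetricSpace M] (C : ℝ) : Prop :=
  ∀ (k : ℕ) (f : IncTuple k → M) (K : ℝ), 0 ≤ K →
    (∀ m n : IncTuple k, dist (f m) (f n) ≤ K * dI m n) →
    ∃ L : Set ℕ, L.Infinite ∧ ∀ m n : IncTuple k, memAll L m → memAll L n →
      dist (f m) (f n) ≤ C * K

/-- Property `Q`. -/
def HasPropQ (M : Type*) [MetricSpace M] : Prop := ∃ C : ℝ, 0 ≤ C ∧ HasPropQConst M C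

/-- The property `Q` constant `Q_M`. -/
noncomputable def QConst (M : Type*) [MetricSpace M] : ℝ :=
  sInf {C : ℝ | 0 ≤ C ∧ HasPropQConst M C}

theorem compl_card {l m : ℕ} (P : Finset (Fin (l + m))) (hP : P.card = l) : Pᶜ.card = m := by
  rw [Finset.card_compl, hP, Fintype.card_fin]; omega

/-- The increasing subtuple `(n_i : i ∈ P)`. -/
def subTuple {k j : ℕ} (n : Fin k → ℕ) (P : Finset (Fin k)) (h : P.card = j) :
    Fin j → ℕ := fun i => n (P.orderEmbOfFin h i)

/-- The set of distances `d_M(f(n_i : i ∈ P), g(n_i : i ∈ P^c))` over `n̄ ∈ [L]^{l+m}`. -/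
def cutDistSet {l m : ℕ} {M : Type*} [MetricSpace M]
    (f : (Fin l → ℕ) → M) (g : (Fin m → ℕ) → M) (L : Set ℕ)
    (P : Finset (Fin (l + m))) (hP : P.card = l) : Set ℝ :=
  {d : ℝ | ∃ n : Fin (l + m) → ℕ, StrictMono n ∧ (∀ i, n i ∈ L) ∧
    d = dist (f (subTuple n P hP)) (g (subTuple n Pᶜ (compl_card P hP)))}

/-- `C`-cut stability. -/
def CutStableWith (M : Type*) [MetricSpace M] (C : ℝ) : Prop :=
  ∀ (l m : ℕ) (f : (Fin l → ℕ) → M) (g : (Fin m → ℕ) → M),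
    IsBddMap f → IsBddMap g → ∀ L : Set ℕ, L.Infinite →
    ∀ (P Q : Finset (Fin (l + m))) (hP : P.card = l) (hQ : Q.card = l),
      sInf (cutDistSet f g L P hP) ≤ C * sSup (cutDistSet f g L Q hQ)

/-- A permutation of `{1,…,l+m}` preserving the order on `{1,…,l}` and on `{l+1,…,l+m}`. -/
def OrderPreservingPerm {l m : ℕ} (π : Equiv.Perm (Fin (l + m))) : Prop :=
  StrictMono (fun i : Fin l => π (Fin.castAdd m i)) ∧
  StrictMono (fun j : Fin m => π (Fin.natAdd l j))

/-- Distances `d_M(f(n_{π(1)},…,n_{π(l)}), g(n_{π(l+1)},…,n_{π(l+m)}))` over `n̄ ∈ [L]^{l+m}`. -/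
def permDistSet {l m : ℕ} {M : Type*} [MetricSpace M]
    (f : (Fin l → ℕ) → M) (g : (Fin m → ℕ) → M) (L : Set ℕ)
    (π : Equiv.Perm (Fin (l + m))) : Set ℝ :=
  {d : ℝ | ∃ n : Fin (l + m) → ℕ, StrictMono n ∧ (∀ i, n i ∈ L) ∧
    d = dist (f (fun i => n (π (Fin.castAdd m i)))) (g (fun j => n (π (Fin.natAdd l j))))}

/-- `C`-upper stability. -/
def UpperStableWith (M : Type*) [MetricSpace M] (C : ℝ) : Prop :=
  ∀ (l m : ℕ) (f : (Fin l → ℕ) → M) (g : (Fin m → ℕ) → M),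
    IsBddMap f → IsBddMap g → ∀ L : Set ℕ, L.Infinite →
    ∀ π : Equiv.Perm (Fin (l + m)), OrderPreservingPerm π →
      sInf (permDistSet f g L (Equiv.refl _)) ≤ C * sSup (permDistSet f g L π)

/-- The modulus of continuity `ω_h`. -/
noncomputable def omegaMod {M N : Type*} [MetricSpace M] [MetricSpace N] (h : M → N)
    (t : ℝ) : ℝ≥0∞ :=
  ⨆ p : {p : M × M // dist p.1 p.2 ≤ t}, edist (h p.1.1) (h p.1.2)

/-- The compression modulus `ρ_h`. -/
noncomputable def rhoMod {M N : Type*} [MetricSpace M] [MetricSpace N] (h : M → N)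
    (t : ℝ) : ℝ≥0∞ :=
  ⨅ p : {p : M × M // t ≤ dist p.1 p.2}, edist (h p.1.1) (h p.1.2)

/-- A coarse embedding, expressed via the moduli. -/
def CoarseEmbMod {M N : Type*} [MetricSpace M] [MetricSpace N] (h : M → N) : Prop :=
  (∀ t : ℝ, omegaMod h t < ⊤) ∧ Tendsto (rhoMod h) atTop (𝓝 ⊤)

/-- A uniform embedding, expressed via the moduli. -/
def UniformEmbMod {M N : Type*} [MetricSpace M] [MetricSpace N] (h : M → N) : Prop :=
  Tendsto (omegaMod h) (𝓝[>] (0 : ℝ)) (𝓝 0) ∧ ∀ t : ℝ, 0 < t → 0 < rhoMod h t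

/-- A free ultrafilter on `ℕ`. -/
def FreeUF (U : Ultrafilter ℕ) : Prop := (U : Filter ℕ) ≤ Filter.cofinite

/-- The iterated ultrafilter limit `lim_{n₁,U₁} ⋯ lim_{n_k,U_k} F(n₁,…,n_k)`. -/
noncomputable def ultraLim : (k : ℕ) → (Fin k → Ultrafilter ℕ) → ((Fin k → ℕ) → ℝ) → ℝ
  | 0, _, F => F (fun i => i.elim0)
  | k + 1, U, F => ultraLim k (fun i => U i.castSucc)
      (fun n => limUnder (U (Fin.last k)) (fun j => F (Fin.snoc n j)))

/-- An unrooted (countably branching) tree of height `k` in `X`. -/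
def TreeU (X : Type*) (k : ℕ) := (i : Fin k) → (Fin (i.1 + 1) → ℕ) → X

/-- A rooted (countably branching) tree of height `k` in `X`. -/
def TreeR (X : Type*) (k : ℕ) := (i : Fin (k + 1)) → (Fin i.1 → ℕ) → X

/-- A normalized unrooted tree takes values in the unit sphere. -/
def NormalizedU {X : Type*} [NormedAddCommGroup X] {k : ℕ} (t : TreeU X k) : Prop :=
  ∀ i v, ‖t i v‖ = 1

/-- A normalized rooted tree takes values in the unit sphere. -/
def NormalizedR {X : Type*} [NormedAddCommGroup X] {k : ℕ} (t : TreeR X k) : Prop :=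
  ∀ i v, ‖t i v‖ = 1

/-- `∀_{U₁} n₁ ⋯ ∀_{U_j} n_j, P(n₁,…,n_j)`. -/
def iterEventually : (j : ℕ) → (Fin j → Ultrafilter ℕ) → ((Fin j → ℕ) → Prop) → Prop
  | 0, _, P => P (fun i => i.elim0)
  | j + 1, U, P => iterEventually j (fun i => U i.castSucc)
      (fun n => ∀ᶠ a in U (Fin.last j), P (Fin.snoc n a))

/-- An unrooted tree is `Ū`-weakly null. -/
def WeaklyNullU {X : Type*} [NormedAddCommGroup X] [NormedSpace ℝ X] {k : ℕ}
    (U : Fin k → Ultrafilter ℕ) (t : TreeU X k) : Prop :=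
  ∀ i : Fin k, iterEventually i.1 (fun j => U (Fin.castLE i.isLt.le j))
    (fun pre => ∀ φ : X →L[ℝ] ℝ,
      Tendsto (fun a : ℕ => φ (t i (Fin.snoc pre a))) (U i) (𝓝 0))

/-- A rooted tree is `Ū`-weakly null. -/
def WeaklyNullR {X : Type*} [NormedAddCommGroup X] [NormedSpace ℝ X] {k : ℕ}
    (U : Fin k → Ultrafilter ℕ) (t : TreeR X k) : Prop :=
  ∀ i : Fin k, iterEventually i.1 (fun j => U (Fin.castLE i.isLt.le j))
    (fun pre => ∀ φ : X →L[ℝ] ℝ,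
      Tendsto (fun a : ℕ => φ (t i.succ (Fin.snoc pre a))) (U i) (𝓝 0))

/-- The norm `N_t^{Ū}(x ⊕ Σ aᵢ eᵢ)`. -/
noncomputable def treeNorm {X : Type*} [NormedAddCommGroup X] [NormedSpace ℝ X] {k : ℕ}
    (U : Fin k → Ultrafilter ℕ) (t : TreeU X k) (x : X) (a : Fin k → ℝ) : ℝ :=
  ultraLim k U (fun n => ‖x + ∑ i : Fin k, a i • t i (fun j => n (Fin.castLE i.isLt j))‖)

/-- The number of elements of `P` that are `≤ j`. -/
def rankIn {k : ℕ} (P : Finset (Fin k)) (j : Fin k) : ℕ :=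
  (P.filter (fun i => i ≤ j)).card

/-- The `P`-intertwining `s ⊛_P t` of two trees. -/
def intertwine {X : Type*} {l m : ℕ} (P : Finset (Fin (l + m))) (hP : P.card = l)
    (s : TreeU X l) (t : TreeU X m) : TreeU X (l + m) := fun j v =>
  let v' : Fin (l + m) → ℕ := fun p => if h : p.1 < j.1 + 1 then v ⟨p.1, h⟩ else 0
  if hj : j ∈ P then
    s ⟨rankIn P j - 1, by
        have h1 : 0 < rankIn P j :=
          Finset.card_pos.mpr ⟨j, Finset.mem_filter.mpr ⟨hj, le_refl j⟩⟩
        have h2 : rankIn P j ≤ l := (Finset.card_filter_le P _).trans hP.le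
        omega⟩
      (fun b => v' (P.orderEmbOfFin hP ⟨b.1, by
        have h1 : 0 < rankIn P j :=
          Finset.card_pos.mpr ⟨j, Finset.mem_filter.mpr ⟨hj, le_refl j⟩⟩
        have h2 : rankIn P j ≤ l := (Finset.card_filter_le P _).trans hP.le
        have h3 := b.isLt
        omega⟩))
  else
    t ⟨rankIn Pᶜ j - 1, by
        have h1 : 0 < rankIn Pᶜ j :=
          Finset.card_pos.mpr ⟨j, Finset.mem_filter.mpr ⟨Finset.mem_compl.mpr hj, le_refl j⟩⟩
        have h2 : rankIn Pᶜ j ≤ m := (Finset.card_filter_le Pᶜ _).trans (compl_card P hP).le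
        omega⟩
      (fun b => v' (Pᶜ.orderEmbOfFin (compl_card P hP) ⟨b.1, by
        have h1 : 0 < rankIn Pᶜ j :=
          Finset.card_pos.mpr ⟨j, Finset.mem_filter.mpr ⟨Finset.mem_compl.mpr hj, le_refl j⟩⟩
        have h2 : rankIn Pᶜ j ≤ m := (Finset.card_filter_le Pᶜ _).trans (compl_card P hP).le
        have h3 := b.isLt
        omega⟩))

/-- The unrooted part of a rooted tree. -/
def unroot {X : Type*} {k : ℕ} (t : TreeR X k) : TreeU X k := fun i v => t i.succ v

/-- The summing basis of `c₀`. -/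
noncomputable def summingBasis (n : ℕ) : C₀(ℕ, ℝ) :=
  ⟨⟨fun x => if x ≤ n then 1 else 0, continuous_of_discreteTopology⟩, by
    rw [cocompact_eq_cofinite, Nat.cofinite_eq_atTop]
    refine (tendsto_congr' ?_).mpr tendsto_const_nhds
    filter_upwards [eventually_gt_atTop n] with x hx
    simp [if_neg (Nat.not_le.mpr hx)]⟩

/-- The canonical map `[ℕ]^k → c₀`, `n̄ ↦ Σᵢ s_{nᵢ}`. -/
noncomputable def interMap {k : ℕ} (m : Fin k → ℕ) : C₀(ℕ, ℝ) :=
  ∑ i : Fin k, summingBasis (m i)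

/-- Krivine–Maurey stability of a metric space. -/
def StableSpace (M : Type*) [MetricSpace M] : Prop :=
  ∀ U V : Ultrafilter ℕ, FreeUF U → FreeUF V →
    ∀ x y : ℕ → M, Bornology.IsBounded (Set.range x) → Bornology.IsBounded (Set.range y) →
      limUnder (U : Filter ℕ) (fun a => limUnder (V : Filter ℕ) (fun b => dist (x a) (y b)))
        = limUnder (V : Filter ℕ) (fun b => limUnder (U : Filter ℕ) (fun a => dist (x a) (y b)))


/-! ### Auxiliary lemmas for `stmt6` -/

namespace Stmt6Aux

open SimpleGraph

variable {k : ℕ}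

/-- Compose an increasing tuple with a strictly monotone map `ℕ → ℕ`. -/
def ctup (e : ℕ → ℕ) (he : StrictMono e) (m : IncTuple k) : IncTuple k :=
  ⟨fun i => e (m.1 i), he.comp m.2⟩

lemma interLE_comp {e : ℕ → ℕ} (he : Monotone e) {m n : Fin k → ℕ} (h : InterLE m n) :
    InterLE (fun i => e (m i)) (fun i => e (n i)) :=
  ⟨fun i => he (h.1 i), fun i hi => he (h.2 i hi)⟩

lemma adj_ctup {e : ℕ → ℕ} (he : StrictMono e) {m n : IncTuple k}
    (h : (interGraph k).Adj m n) :
    (interGraph k).Adj (ctup e he m) (ctup e he n) := by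
  show _ ≠ _ ∧ _
  refine ⟨fun hc => h.1 ?_, ?_⟩
  · apply Subtype.ext; funext i
    exact he.injective (congrFun (congrArg Subtype.val hc) i)
  · rcases h.2 with h' | h'
    · exact Or.inl (interLE_comp he.monotone h')
    · exact Or.inr (interLE_comp he.monotone h')

/-- The graph homomorphism induced by a strictly monotone reindexing. -/
def ghom (e : ℕ → ℕ) (he : StrictMono e) : interGraph k →g interGraph k :=
  ⟨ctup e he, fun h => adj_ctup he h⟩

/-- The chain function interpolating between `m` and `t`. -/
def cf (m t : IncTuple k) (x : ℕ) : ℕ :=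
  if h : x < k then m.1 ⟨x, h⟩ else if h2 : x - k < k then t.1 ⟨x - k, h2⟩ else 0

lemma cf_lt_cf {m t : IncTuple k} (H : ordLT m t) {x y : ℕ} (hxy : x < y) (hy : y < 2 * k) :
    cf m t x < cf m t y := by
  unfold cf
  by_cases h1 : x < k
  · by_cases h2 : y < k
    · simp only [dif_pos h1, dif_pos h2]
      exact m.2 (Fin.mk_lt_mk.mpr hxy)
    · have h3 : y - k < k := by omega
      simp only [dif_pos h1, dif_neg h2, dif_pos h3]
      exact H ⟨x, h1⟩ ⟨y - k, h3⟩
  · have hx2 : x - k < k := by omega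
    have h2 : ¬ y < k := by omega
    have h3 : y - k < k := by omega
    simp only [dif_neg h1, dif_pos hx2, dif_neg h2, dif_pos h3]
    exact t.2 (Fin.mk_lt_mk.mpr (by omega))

/-- The `j`-th vertex of the interpolating chain from `m` to `t`. -/
def chainV (m t : IncTuple k) (H : ordLT m t) (j : ℕ) (hj : j ≤ k) : IncTuple k :=
  ⟨fun i => cf m t (i.1 + j), fun a b hab => by
    have h1 : a.1 < b.1 := hab
    have h2 := b.2
    exact cf_lt_cf H (by omega) (by omega)⟩

lemma chainV_zero (m t : IncTuple k) (H : ordLT m t) : chainV m t H 0 (Nat.zero_le k) = m := by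
  apply Subtype.ext; funext i
  simp only [chainV, cf, Nat.add_zero, dif_pos i.2]

lemma chainV_last (m t : IncTuple k) (H : ordLT m t) : chainV m t H k le_rfl = t := by
  apply Subtype.ext; funext i
  have h1 : ¬ i.1 + k < k := by omega
  have h2 : i.1 + k - k < k := by omega
  have h3 : i.1 + k - k = i.1 := by omega
  simp only [chainV, cf, dif_neg h1, dif_pos h2]
  have h4 : (⟨i.1 + k - k, h2⟩ : Fin k) = i := Fin.ext h3
  rw [h4]

lemma chainV_adj (m t : IncTuple k) (H : ordLT m t) (j : ℕ) (hj : j + 1 ≤ k) :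
    (interGraph k).Adj (chainV m t H j (by omega)) (chainV m t H (j + 1) hj) := by
  have hk : 0 < k := by omega
  show _ ≠ _ ∧ _
  constructor
  · intro hc
    have := congrFun (congrArg Subtype.val hc) ⟨k - 1, by omega⟩
    simp only [chainV] at this
    exact absurd this (ne_of_lt (cf_lt_cf H (by omega) (by omega)))
  · left
    constructor
    · intro i
      exact le_of_lt (cf_lt_cf H (by omega) (by omega : i.1 + (j + 1) < 2 * k))
    · intro i hik
      show cf m t (i + (j + 1)) ≤ cf m t (i + 1 + j)
      rw [show i + 1 + j = i + (j + 1) by omega]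

lemma exists_walk_chain (m t : IncTuple k) (H : ordLT m t) :
    ∀ (c j : ℕ) (h : j + c = k),
      ∃ p : (interGraph k).Walk (chainV m t H j (by omega)) (chainV m t H k le_rfl),
        p.length ≤ c := by
  intro c
  induction c with
  | zero =>
    intro j h
    have hjk : j = k := by omega
    subst hjk
    exact ⟨Walk.nil, by simp⟩
  | succ c ih =>
    intro j h
    obtain ⟨p, hp⟩ := ih (j + 1) (by omega)
    refine ⟨Walk.cons (chainV_adj m t H j (by omega)) p, ?_⟩
    simpa using Nat.succ_le_succ hp

lemma exists_walk_ordLT (m t : IncTuple k) (H : ordLT m t) :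
    ∃ p : (interGraph k).Walk m t, p.length ≤ k := by
  obtain ⟨p, hp⟩ := exists_walk_chain m t H k 0 (by omega)
  exact ⟨p.copy (chainV_zero m t H) (chainV_last m t H), by simpa using hp⟩

/-- A common strict upper tuple for `m` and `n`. -/
def upT (m n : IncTuple k) : IncTuple k :=
  ⟨fun i => (Finset.univ.sup fun i => max (m.1 i) (n.1 i)) + 1 + i.1,
    fun a b hab => by have : a.1 < b.1 := hab; dsimp only; omega⟩

lemma ordLT_upT_left (m n : IncTuple k) : ordLT m (upT m n) := by
  intro i j
  have : m.1 i ≤ Finset.univ.sup fun i => max (m.1 i) (n.1 i) :=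
    le_trans (le_max_left _ _)
      (Finset.le_sup (f := fun i => max (m.1 i) (n.1 i)) (Finset.mem_univ i))
  simp only [upT]
  omega

lemma ordLT_upT_right (m n : IncTuple k) : ordLT n (upT m n) := by
  intro i j
  have : n.1 i ≤ Finset.univ.sup fun i => max (m.1 i) (n.1 i) :=
    le_trans (le_max_right _ _)
      (Finset.le_sup (f := fun i => max (m.1 i) (n.1 i)) (Finset.mem_univ i))
  simp only [upT]
  omega

lemma exists_walk_pair (m n : IncTuple k) :
    ∃ p : (interGraph k).Walk m n, p.length ≤ 2 * k := by
  obtain ⟨p, hp⟩ := exists_walk_ordLT m (upT m n) (ordLT_upT_left m n)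
  obtain ⟨q, hq⟩ := exists_walk_ordLT n (upT m n) (ordLT_upT_right m n)
  refine ⟨p.append q.reverse, ?_⟩
  rw [Walk.length_append, Walk.length_reverse]
  omega

lemma reachable_pair (m n : IncTuple k) : (interGraph k).Reachable m n :=
  ⟨(exists_walk_pair m n).choose⟩

lemma dI_le (m n : IncTuple k) : dI m n ≤ 2 * k := by
  obtain ⟨p, hp⟩ := exists_walk_pair m n
  exact le_trans (SimpleGraph.dist_le p) hp

lemma dI_ctup_le (e : ℕ → ℕ) (he : StrictMono e) (m n : IncTuple k) :
    dI (ctup e he m) (ctup e he n) ≤ dI m n := by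
  obtain ⟨p, hp⟩ := (reachable_pair m n).exists_walk_length_eq_dist
  calc dI (ctup e he m) (ctup e he n) ≤ (p.map (ghom e he)).length := SimpleGraph.dist_le _
  _ = p.length := by simp
  _ = dI m n := hp

section Banach

variable {X : Type*} [NormedAddCommGroup X] [NormedSpace ℝ X]

lemma key {ε δ : ℝ} (hε : 0 < ε) (hε1 : ε < 1) (hδ : 0 < δ)
    (hQ : HasQProp (Metric.closedBall (0 : X) 1) ε δ) {k : ℕ} (f : IncTuple k → X)
    (hf : ∀ m n : IncTuple k, dist (f m) (f n) ≤ δ * dI m n) :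
    ∀ (N : ℕ) (e : ℕ → ℕ) (he : StrictMono e) (c : X) (R : ℝ),
      (∀ v : IncTuple k, ‖f (ctup e he v) - c‖ ≤ R) → R ≤ ε⁻¹ ^ N →
      ∃ L : Set ℕ, L.Infinite ∧ ∀ m n : IncTuple k, memAll L m → memAll L n → ordLT m n →
        dist (f m) (f n) < ε := by
  intro N
  induction N with
  | zero =>
    intro e he c R hb hR
    simp only [pow_zero] at hR
    set s : ℝ := max R 1 with hs
    have hs1 : s = 1 := max_eq_right hR
    have hs0 : (0 : ℝ) < s := by rw [hs1]; norm_num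
    have hsR : R ≤ s := le_max_left _ _
    -- the rescaled map into the ball
    have hmem : ∀ v : IncTuple k, s⁻¹ • (f (ctup e he v) - c) ∈ Metric.closedBall (0 : X) 1 := by
      intro v
      rw [Metric.mem_closedBall, dist_zero_right, norm_smul, Real.norm_eq_abs,
        abs_of_pos (inv_pos.mpr hs0)]
      have h1 : s⁻¹ * ‖f (ctup e he v) - c‖ ≤ s⁻¹ * s := by
        apply mul_le_mul_of_nonneg_left (le_trans (hb v) hsR) (le_of_lt (inv_pos.mpr hs0))
      rwa [inv_mul_cancel₀ (ne_of_gt hs0)] at h1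
    set h : IncTuple k → Metric.closedBall (0 : X) 1 :=
      fun v => ⟨s⁻¹ • (f (ctup e he v) - c), hmem v⟩ with hhdef
    have hdist : ∀ a b : IncTuple k,
        dist (h a) (h b) = s⁻¹ * dist (f (ctup e he a)) (f (ctup e he b)) := by
      intro a b
      rw [Subtype.dist_eq]
      show dist (s⁻¹ • (f (ctup e he a) - c)) (s⁻¹ • (f (ctup e he b) - c)) = _
      rw [dist_eq_norm, ← smul_sub, norm_smul, Real.norm_eq_abs, abs_of_pos (inv_pos.mpr hs0),
        sub_sub_sub_cancel_right, ← dist_eq_norm]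
    have hlip : ∀ a b : IncTuple k, dist (h a) (h b) ≤ δ * dI a b := by
      intro a b
      rw [hdist]
      calc s⁻¹ * dist (f (ctup e he a)) (f (ctup e he b))
          ≤ 1 * dist (f (ctup e he a)) (f (ctup e he b)) := by
            apply mul_le_mul_of_nonneg_right _ dist_nonneg
            rw [hs1]; norm_num
        _ = dist (f (ctup e he a)) (f (ctup e he b)) := one_mul _
        _ ≤ δ * dI (ctup e he a) (ctup e he b) := hf _ _
        _ ≤ δ * dI a b := by
            apply mul_le_mul_of_nonneg_left _ (le_of_lt hδ)
            exact_mod_cast dI_ctup_le e he a b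
    obtain ⟨L, hLinf, hL⟩ := hQ k h hlip
    refine ⟨e '' L, hLinf.image (he.injective.injOn), ?_⟩
    intro m n hm hn hmn
    have hma : ∀ i, (hm i : m.1 i ∈ e '' L).choose ∈ L ∧ e (hm i).choose = m.1 i :=
      fun i => ⟨((hm i).choose_spec).1, ((hm i).choose_spec).2⟩
    have hna : ∀ i, (hn i : n.1 i ∈ e '' L).choose ∈ L ∧ e (hn i).choose = n.1 i :=
      fun i => ⟨((hn i).choose_spec).1, ((hn i).choose_spec).2⟩
    set a : Fin k → ℕ := fun i => (hm i).choose with hadef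
    set b : Fin k → ℕ := fun i => (hn i).choose with hbdef
    have ham : StrictMono a := by
      intro i j hij
      apply he.lt_iff_lt.mp
      rw [(hma i).2, (hma j).2]
      exact m.2 hij
    have hbm : StrictMono b := by
      intro i j hij
      apply he.lt_iff_lt.mp
      rw [(hna i).2, (hna j).2]
      exact n.2 hij
    set m' : IncTuple k := ⟨a, ham⟩
    set n' : IncTuple k := ⟨b, hbm⟩
    have hme : ctup e he m' = m := Subtype.ext (funext fun i => (hma i).2)
    have hne : ctup e he n' = n := Subtype.ext (funext fun i => (hna i).2)
    have hord : ordLT m' n' := by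
      intro i j
      apply he.lt_iff_lt.mp
      rw [(hma i).2, (hna j).2]
      exact hmn i j
    have := hL m' n' (fun i => (hma i).1) (fun i => (hna i).1) hord
    rw [hdist, hme, hne, hs1, inv_one, one_mul] at this
    exact this
  | succ N ih =>
    intro e he c R hb hR
    set s : ℝ := max R 1 with hs
    have hs1 : 1 ≤ s := le_max_right _ _
    have hs0 : (0 : ℝ) < s := lt_of_lt_of_le one_pos hs1
    have hsR : R ≤ s := le_max_left _ _
    have hmem : ∀ v : IncTuple k, s⁻¹ • (f (ctup e he v) - c) ∈ Metric.closedBall (0 : X) 1 := by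
      intro v
      rw [Metric.mem_closedBall, dist_zero_right, norm_smul, Real.norm_eq_abs,
        abs_of_pos (inv_pos.mpr hs0)]
      have h1 : s⁻¹ * ‖f (ctup e he v) - c‖ ≤ s⁻¹ * s := by
        apply mul_le_mul_of_nonneg_left (le_trans (hb v) hsR) (le_of_lt (inv_pos.mpr hs0))
      rwa [inv_mul_cancel₀ (ne_of_gt hs0)] at h1
    set h : IncTuple k → Metric.closedBall (0 : X) 1 :=
      fun v => ⟨s⁻¹ • (f (ctup e he v) - c), hmem v⟩ with hhdef
    have hdist : ∀ a b : IncTuple k,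
        dist (h a) (h b) = s⁻¹ * dist (f (ctup e he a)) (f (ctup e he b)) := by
      intro a b
      rw [Subtype.dist_eq]
      show dist (s⁻¹ • (f (ctup e he a) - c)) (s⁻¹ • (f (ctup e he b) - c)) = _
      rw [dist_eq_norm, ← smul_sub, norm_smul, Real.norm_eq_abs, abs_of_pos (inv_pos.mpr hs0),
        sub_sub_sub_cancel_right, ← dist_eq_norm]
    have hlip : ∀ a b : IncTuple k, dist (h a) (h b) ≤ δ * dI a b := by
      intro a b
      rw [hdist]
      calc s⁻¹ * dist (f (ctup e he a)) (f (ctup e he b))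
          ≤ 1 * dist (f (ctup e he a)) (f (ctup e he b)) := by
            apply mul_le_mul_of_nonneg_right _ dist_nonneg
            exact inv_le_one_of_one_le₀ hs1
        _ = dist (f (ctup e he a)) (f (ctup e he b)) := one_mul _
        _ ≤ δ * dI (ctup e he a) (ctup e he b) := hf _ _
        _ ≤ δ * dI a b := by
            apply mul_le_mul_of_nonneg_left _ (le_of_lt hδ)
            exact_mod_cast dI_ctup_le e he a b
    obtain ⟨L, hLinf, hL⟩ := hQ k h hlip
    have hLinf' : (setOf (· ∈ L)).Infinite := by exact hLinf
    set g : ℕ → ℕ := Nat.nth (· ∈ L) with hgdef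
    have hg : StrictMono g := Nat.nth_strictMono hLinf'
    have hgmem : ∀ x, g x ∈ L := fun x => Nat.nth_mem_of_infinite hLinf' x
    set w : IncTuple k := ⟨fun i => g i.1, hg.comp (fun a b h => h)⟩ with hwdef
    have hek : StrictMono (fun x : ℕ => x + k) := fun a b h => Nat.add_lt_add_right h k
    set e' : ℕ → ℕ := fun x => e (g (x + k)) with he'def
    have he' : StrictMono e' := he.comp (hg.comp hek)
    set c' : X := f (ctup e he w) with hc'def
    have hb' : ∀ v : IncTuple k, ‖f (ctup e' he' v) - c'‖ ≤ ε * s := by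
      intro v
      set n' : IncTuple k := ⟨fun i => g (v.1 i + k), by
        intro i j hij
        exact hg (by have := v.2 hij; omega)⟩ with hn'def
      have hctup : ctup e' he' v = ctup e he n' := Subtype.ext (funext fun i => rfl)
      have hord : ordLT w n' := by
        intro i j
        apply hg
        have := i.2
        omega
      have hd := hL w n' (fun i => hgmem _) (fun i => hgmem _) hord
      rw [hdist] at hd
      have hd2 : dist (f (ctup e he w)) (f (ctup e he n')) < ε * s := by
        have := mul_lt_mul_of_pos_left hd hs0
        rwa [← mul_assoc, mul_inv_cancel₀ (ne_of_gt hs0), one_mul, mul_comm s ε] at this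
      rw [hctup, ← dist_eq_norm, _root_.dist_comm]
      exact le_of_lt hd2
    apply ih e' he' c' (ε * s) hb'
    have hεinv : (1 : ℝ) ≤ ε⁻¹ ^ (N + 1) :=
      one_le_pow₀ (le_of_lt ((one_lt_inv₀ hε).mpr hε1))
    have hsle : s ≤ ε⁻¹ ^ (N + 1) := max_le hR hεinv
    calc ε * s ≤ ε * ε⁻¹ ^ (N + 1) := mul_le_mul_of_nonneg_left hsle (le_of_lt hε)
      _ = ε⁻¹ ^ N := by
        rw [pow_succ, ← mul_assoc, mul_comm ε, mul_assoc, mul_inv_cancel₀ (ne_of_gt hε), mul_one]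

lemma qprop_ball_to_space {ε δ : ℝ} (hε : 0 < ε) (hε1 : ε < 1)
    (hQ : HasQProp (Metric.closedBall (0 : X) 1) ε δ) : HasQProp X ε δ := by
  intro k f hf
  rcases le_or_gt δ 0 with hδ | hδ
  · refine ⟨Set.univ, Set.infinite_univ, ?_⟩
    intro m n _ _ _
    have h0 : dist (f m) (f n) ≤ 0 :=
      le_trans (hf m n) (mul_nonpos_of_nonpos_of_nonneg hδ (Nat.cast_nonneg _))
    exact lt_of_le_of_lt h0 hε
  · -- initial data for the iteration
    set idt : IncTuple k := ⟨fun i => i.1, fun a b h => h⟩ with hidt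
    have hid : StrictMono (id : ℕ → ℕ) := fun a b h => h
    have hctid : ∀ v : IncTuple k, ctup id hid v = v := fun v => Subtype.ext (funext fun i => rfl)
    have hb : ∀ v : IncTuple k, ‖f (ctup id hid v) - f idt‖ ≤ δ * (2 * k) := by
      intro v
      rw [hctid, ← dist_eq_norm]
      refine le_trans (hf v idt) ?_
      apply mul_le_mul_of_nonneg_left _ (le_of_lt hδ)
      exact_mod_cast dI_le v idt
    have h1ε : (1 : ℝ) < ε⁻¹ := (one_lt_inv₀ hε).mpr hε1
    obtain ⟨N, hN⟩ := pow_unbounded_of_one_lt (δ * (2 * k)) h1ε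
    exact key hε hε1 hδ hQ f hf N id hid (f idt) (δ * (2 * k)) hb (le_of_lt hN)

lemma qprop_space_to_ball {ε δ : ℝ} (hQ : HasQProp X ε δ) :
    HasQProp (Metric.closedBall (0 : X) 1) ε δ := by
  intro k f hf
  obtain ⟨L, h1, h2⟩ := hQ k (fun v => (f v : X))
    (fun m n => by rw [← Subtype.dist_eq]; exact hf m n)
  exact ⟨L, h1, fun m n hm hn h => by rw [Subtype.dist_eq]; exact h2 m n hm hn h⟩

end Banach

end Stmt6Aux

/-- For a Banach space `X`, `Δ_X(ε) = Δ_{B_X}(ε)` for all `0 < ε < 1`. -/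
theorem stmt6 (X : Type*) [NormedAddCommGroup X] [NormedSpace ℝ X] [CompleteSpace X] :
    ∀ ε : ℝ, 0 < ε → ε < 1 →
      DeltaMod X ε = DeltaMod (Metric.closedBall (0 : X) 1) ε := by
  intro ε hε hε1
  unfold DeltaMod
  congr 1
  ext δ
  constructor
  · rintro ⟨h0, hQ⟩
    exact ⟨h0, Stmt6Aux.qprop_space_to_ball hQ⟩
  · rintro ⟨h0, hQ⟩
    exact ⟨h0, Stmt6Aux.qprop_ball_to_space hε hε1 hQ⟩
end

section
/- Upper stability, cut stability, and property Q are equivalent for metric spaces: a metric space M has property Q if and only if M is cut stable if and only if M is upper stable. -/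
open Filter Topology
open scoped ZeroAtInfty ENNReal NNReal

/-! ### Auxiliary development -/

namespace Stmt10Aux

open SimpleGraph

/-! #### Tuples in infinite sets -/

lemma exists_inc (k N : ℕ) (L : Set ℕ) (hL : L.Infinite) :
    ∃ v : Fin k → ℕ, StrictMono v ∧ (∀ i, v i ∈ L) ∧ ∀ i, N < v i := by
  have h' : (L \ Set.Iic N).Infinite := hL.diff (Set.finite_Iic N)
  have h'' : {x : ℕ | x ∈ L \ Set.Iic N}.Infinite := h'
  refine ⟨fun i => Nat.nth (· ∈ L \ Set.Iic N) i, ?_, ?_, ?_⟩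
  · exact fun a b hab => (Nat.nth_lt_nth h'').2 hab
  · intro i; exact (Nat.nth_mem_of_infinite h'' i).1
  · intro i
    have := (Nat.nth_mem_of_infinite h'' i).2
    simpa using this

instance instSubsingletonIncTuple0 : Subsingleton (IncTuple 0) :=
  ⟨fun a b => Subtype.ext (funext fun i => i.elim0)⟩

/-! #### Walks in the interlacing graph -/

/-- value of the mixed tuple -/
def mixVal {k : ℕ} (y : IncTuple k) (t s : ℕ) : ℕ :=
  if h : s < k then y.1 ⟨s, h⟩ else t + (s - k)

lemma mixVal_strictMono {k : ℕ} (y : IncTuple k) (t : ℕ) (ht : ∀ i, y.1 i < t)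
    {s s' : ℕ} (h : s < s') : mixVal y t s < mixVal y t s' := by
  unfold mixVal
  split_ifs with h1 h2 h2
  · exact y.2 (show (⟨s, h1⟩ : Fin k) < ⟨s', h2⟩ from h)
  · exact lt_of_lt_of_le (ht ⟨s, h1⟩) (Nat.le_add_right t _)
  · omega
  · omega

/-- the `j`-th mixed tuple on the walk from `y` to the grid tuple -/
def mix {k : ℕ} (y : IncTuple k) (t : ℕ) (ht : ∀ i, y.1 i < t) (j : ℕ) : IncTuple k :=
  ⟨fun i => mixVal y t (i.1 + j), fun a b hab => mixVal_strictMono y t ht (by omega)⟩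

lemma mix_zero {k : ℕ} (y : IncTuple k) (t : ℕ) (ht : ∀ i, y.1 i < t) : mix y t ht 0 = y := by
  apply Subtype.ext; funext i
  simp only [mix, mixVal]
  rw [dif_pos (by omega : i.1 + 0 < k)]
  exact congrArg y.1 (Fin.ext (Nat.add_zero i.1))

lemma mix_adj {k : ℕ} (y : IncTuple k) (t : ℕ) (ht : ∀ i, y.1 i < t) {j : ℕ} (hj : j < k) :
    (interGraph k).Adj (mix y t ht j) (mix y t ht (j + 1)) := by
  show _ ≠ _ ∧ Interlacing _ _
  constructor
  · intro hcon
    have h0 : (mix y t ht j).1 ⟨0, by omega⟩ = (mix y t ht (j+1)).1 ⟨0, by omega⟩ := by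
      rw [hcon]
    have : mixVal y t (0 + j) < mixVal y t (0 + (j+1)) := mixVal_strictMono y t ht (by omega)
    simp only [mix] at h0
    omega
  · left
    constructor
    · intro i
      exact le_of_lt (mixVal_strictMono y t ht (by omega))
    · intro i hik
      show mixVal y t (i + (j+1)) ≤ mixVal y t ((i+1) + j)
      have : i + (j+1) = (i+1) + j := by omega
      rw [this]

lemma walk_mix {k : ℕ} (y : IncTuple k) (t : ℕ) (ht : ∀ i, y.1 i < t) :
    ∀ (d j : ℕ), j + d = k →
      ∃ w : (interGraph k).Walk (mix y t ht j) (mix y t ht k), w.length ≤ d := by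
  intro d
  induction d with
  | zero =>
    intro j hj
    have hj' : j = k := by omega
    subst hj'
    exact ⟨SimpleGraph.Walk.nil, by simp⟩
  | succ d ih =>
    intro j hj
    rcases Nat.lt_or_ge j k with hjk | hjk
    · obtain ⟨w, hw⟩ := ih (j + 1) (by omega)
      exact ⟨SimpleGraph.Walk.cons (mix_adj y t ht hjk) w, by simp; omega⟩
    · have hj' : j = k := by omega
      subst hj'
      exact ⟨SimpleGraph.Walk.nil, by simp⟩

lemma dist_to_mixk {k : ℕ} (y : IncTuple k) (t : ℕ) (ht : ∀ i, y.1 i < t) :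
    (interGraph k).dist y (mix y t ht k) ≤ k := by
  obtain ⟨w, hw⟩ := walk_mix y t ht k 0 (by omega)
  calc (interGraph k).dist y (mix y t ht k)
      = (interGraph k).dist (mix y t ht 0) (mix y t ht k) := by rw [mix_zero]
    _ ≤ w.length := SimpleGraph.dist_le w
    _ ≤ k := hw

lemma mix_k_eq {k : ℕ} (y z : IncTuple k) (t : ℕ) (hty : ∀ i, y.1 i < t) (htz : ∀ i, z.1 i < t) :
    mix y t hty k = mix z t htz k := by
  apply Subtype.ext; funext i
  simp only [mix, mixVal]
  rw [dif_neg (by omega), dif_neg (by omega)]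

lemma reachable_mixk {k : ℕ} (y : IncTuple k) (t : ℕ) (ht : ∀ i, y.1 i < t) :
    (interGraph k).Reachable y (mix y t ht k) := by
  obtain ⟨w, _⟩ := walk_mix y t ht k 0 (by omega)
  exact ⟨(w.copy (mix_zero y t ht) rfl)⟩

lemma exists_common_top {k : ℕ} (y z : IncTuple k) :
    ∃ t : ℕ, (∀ i, y.1 i < t) ∧ (∀ i, z.1 i < t) := by
  refine ⟨(Finset.univ.sup y.1 ⊔ Finset.univ.sup z.1) + 1, ?_, ?_⟩
  · intro i
    have := Finset.le_sup (f := y.1) (Finset.mem_univ i)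
    omega
  · intro i
    have := Finset.le_sup (f := z.1) (Finset.mem_univ i)
    omega

lemma interGraph_preconnected (k : ℕ) : (interGraph k).Preconnected := by
  intro y z
  obtain ⟨t, hty, htz⟩ := exists_common_top y z
  have h1 := reachable_mixk y t hty
  have h2 := reachable_mixk z t htz
  rw [mix_k_eq y z t hty htz] at h1
  exact h1.trans h2.symm

lemma interGraph_connected (k : ℕ) : (interGraph k).Connected := by
  have : Nonempty (IncTuple k) := ⟨⟨fun i => i.1, fun a b hab => hab⟩⟩
  exact ⟨interGraph_preconnected k⟩

lemma dI_le_two_k {k : ℕ} (y z : IncTuple k) : dI y z ≤ 2 * k := by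
  obtain ⟨t, hty, htz⟩ := exists_common_top y z
  have h1 := dist_to_mixk y t hty
  have h2 := dist_to_mixk z t htz
  rw [mix_k_eq y z t hty htz] at h1
  have htri := (interGraph_connected k).dist_triangle (u := y) (v := mix z t htz k) (w := z)
  have h2' : (interGraph k).dist (mix z t htz k) z ≤ k := by
    rwa [SimpleGraph.dist_comm] at h2
  unfold dI
  omega

lemma dist_le_mul_dI {M : Type*} [MetricSpace M] {k : ℕ} (h : IncTuple k → M) (K : ℝ)
    (hK : 0 ≤ K) (hadj : ∀ a b, (interGraph k).Adj a b → dist (h a) (h b) ≤ K) :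
    ∀ a b, dist (h a) (h b) ≤ K * dI a b := by
  have key : ∀ (a b : IncTuple k) (w : (interGraph k).Walk a b),
      dist (h a) (h b) ≤ K * w.length := by
    intro a b w
    induction w with
    | nil => simp
    | @cons u v x hadj' p ih =>
      calc dist (h u) (h x) ≤ dist (h u) (h v) + dist (h v) (h x) := dist_triangle _ _ _
        _ ≤ K + K * p.length := add_le_add (hadj _ _ hadj') ih
        _ = K * (p.length + 1) := by ring
        _ = K * (SimpleGraph.Walk.cons hadj' p).length := by
            rw [SimpleGraph.Walk.length_cons]; push_cast; ring
  intro a b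
  obtain ⟨w, hw⟩ := (interGraph_preconnected k a b).exists_walk_length_eq_dist
  have := key a b w
  rw [hw] at this
  exact this

end Stmt10Aux

namespace Stmt10Aux

/-! #### Infinite Ramsey theorem -/

theorem ramseyInf (r : ℕ) : ∀ (j : ℕ) (F : (Fin j → ℕ) → Fin (r+1)) (L₀ : Set ℕ),
    L₀.Infinite →
    ∃ L : Set ℕ, L ⊆ L₀ ∧ L.Infinite ∧ ∃ c, ∀ v : Fin j → ℕ,
      StrictMono v → (∀ i, v i ∈ L) → F v = c := by
  intro j
  induction j with
  | zero =>
    intro F L₀ hL₀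
    refine ⟨L₀, le_refl _, hL₀, F (fun i => i.elim0), ?_⟩
    intro v _ _
    congr 1
    funext i
    exact i.elim0
  | succ j ih =>
    intro F L₀ hL₀
    -- one-step refinement
    have key : ∀ S : Set ℕ, S.Infinite →
        ∃ (a : ℕ) (T : Set ℕ) (c : Fin (r+1)), a ∈ S ∧ T ⊆ S ∧ T.Infinite ∧
          (∀ x ∈ T, a < x) ∧
          ∀ v : Fin j → ℕ, StrictMono v → (∀ i, v i ∈ T) → F (Fin.cons a v) = c := by
      intro S hS
      obtain ⟨a, ha⟩ := hS.nonempty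
      have hS' : (S \ Set.Iic a).Infinite := hS.diff (Set.finite_Iic a)
      obtain ⟨T, hTsub, hTinf, c, hc⟩ := ih (fun v => F (Fin.cons a v)) _ hS'
      refine ⟨a, T, c, ha, fun x hx => (hTsub hx).1, hTinf, ?_, hc⟩
      intro x hx
      have := (hTsub hx).2
      simpa using this
    -- iterate
    have key2 : ∀ S : {S : Set ℕ // S.Infinite ∧ S ⊆ L₀},
        ∃ p : ℕ × {S : Set ℕ // S.Infinite ∧ S ⊆ L₀} × Fin (r+1),
          p.1 ∈ S.1 ∧ p.2.1.1 ⊆ S.1 ∧ (∀ x ∈ p.2.1.1, p.1 < x) ∧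
          ∀ v : Fin j → ℕ, StrictMono v → (∀ i, v i ∈ p.2.1.1) →
            F (Fin.cons p.1 v) = p.2.2 := by
      rintro ⟨S, hSinf, hSsub⟩
      obtain ⟨a, T, c, ha, hTS, hTinf, hgt, hhom⟩ := key S hSinf
      exact ⟨⟨a, ⟨T, hTinf, fun x hx => hSsub (hTS hx)⟩, c⟩, ha, hTS, hgt, hhom⟩
    let step : {S : Set ℕ // S.Infinite ∧ S ⊆ L₀} →
        ℕ × {S : Set ℕ // S.Infinite ∧ S ⊆ L₀} × Fin (r+1) := fun S => (key2 S).choose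
    let St : ℕ → {S : Set ℕ // S.Infinite ∧ S ⊆ L₀} := fun n =>
      Nat.rec ⟨L₀, hL₀, le_refl _⟩ (fun _ prev => (step prev).2.1) n
    let a : ℕ → ℕ := fun n => (step (St n)).1
    let c : ℕ → Fin (r+1) := fun n => (step (St n)).2.2
    have hspec : ∀ n, a n ∈ (St n).1 ∧ (St (n+1)).1 ⊆ (St n).1 ∧
        (∀ x ∈ (St (n+1)).1, a n < x) ∧
        ∀ v : Fin j → ℕ, StrictMono v → (∀ i, v i ∈ (St (n+1)).1) →
          F (Fin.cons (a n) v) = c n := by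
      intro n
      have h := (key2 (St n)).choose_spec
      exact h
    have hchain : ∀ m n, m ≤ n → (St n).1 ⊆ (St m).1 := by
      intro m n hmn
      induction n with
      | zero => have : m = 0 := by omega
                subst this; exact le_refl _
      | succ n ihn =>
        rcases Nat.lt_or_ge m (n+1) with h | h
        · exact ((hspec n).2.1).trans (ihn (by omega))
        · have : m = n + 1 := by omega
          subst this; exact le_refl _
    have ha_mem : ∀ m n, m < n → a n ∈ (St (m+1)).1 := by
      intro m n hmn
      exact hchain (m+1) n hmn ((hspec n).1)
    have ha_lt : ∀ m n, m < n → a m < a n := by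
      intro m n hmn
      exact (hspec m).2.2.1 _ (ha_mem m n hmn)
    have ha_inj : Function.Injective a := by
      intro m n hmn
      by_contra hne
      rcases Nat.lt_or_ge m n with h | h
      · exact absurd hmn (Nat.ne_of_lt (ha_lt m n h))
      · exact absurd hmn.symm (Nat.ne_of_lt (ha_lt n m (by omega)))
    obtain ⟨cstar, hcstar⟩ := Finite.exists_infinite_fiber c
    have hfib : {n : ℕ | c n = cstar}.Infinite := by
      rw [← Set.infinite_coe_iff]
      exact hcstar
    refine ⟨a '' {n | c n = cstar}, ?_, hfib.image (ha_inj.injOn), cstar, ?_⟩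
    · rintro x ⟨n, _, rfl⟩
      exact (St n).2.2 ((hspec n).1)
    · rintro v hv hvL
      obtain ⟨n₀, hn₀c, hn₀⟩ := hvL 0
      have htail : ∀ i : Fin j, v i.succ ∈ (St (n₀+1)).1 := by
        intro i
        obtain ⟨ni, _, hni⟩ := hvL i.succ
        have hlt : v 0 < v i.succ := hv (Fin.succ_pos i)
        rw [← hn₀, ← hni] at hlt
        have : n₀ < ni := by
          by_contra hcon
          rcases Nat.lt_or_ge ni n₀ with h | h
          · exact absurd hlt (not_lt.mpr (le_of_lt (ha_lt ni n₀ h)))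
          · have : ni = n₀ := by omega
            subst this; omega
        rw [← hni]
        exact ha_mem n₀ ni this
      have hmono : StrictMono (Fin.tail v) := fun p q hpq => hv (Fin.succ_lt_succ_iff.mpr hpq)
      have := (hspec n₀).2.2.2 (Fin.tail v) hmono htail
      rw [hn₀] at this
      rw [← Fin.cons_self_tail v, this]
      exact hn₀c

end Stmt10Aux

namespace Stmt10Aux

/-! #### rank lemmas -/

section rank

variable {k : ℕ}

lemma rankIn_mono (X : Finset (Fin k)) {p q : Fin k} (h : p ≤ q) : rankIn X p ≤ rankIn X q := by
  apply Finset.card_le_card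
  intro x hx
  rw [Finset.mem_filter] at hx ⊢
  exact ⟨hx.1, le_trans hx.2 h⟩

lemma rankIn_le_card (X : Finset (Fin k)) (p : Fin k) : rankIn X p ≤ X.card :=
  Finset.card_filter_le _ _

lemma one_le_rankIn (X : Finset (Fin k)) {p : Fin k} (hp : p ∈ X) : 1 ≤ rankIn X p :=
  Finset.card_pos.mpr ⟨p, Finset.mem_filter.mpr ⟨hp, le_refl _⟩⟩

lemma rankIn_lt_of_mem (X : Finset (Fin k)) {p q : Fin k} (hq : q ∈ X) (h : p < q) :
    rankIn X p < rankIn X q := by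
  apply Finset.card_lt_card
  rw [Finset.ssubset_iff_of_subset]
  · exact ⟨q, Finset.mem_filter.mpr ⟨hq, le_refl _⟩, by
      rw [Finset.mem_filter]
      rintro ⟨-, hqp⟩
      exact absurd h (not_lt.mpr hqp)⟩
  · intro x hx
    rw [Finset.mem_filter] at hx ⊢
    exact ⟨hx.1, le_trans hx.2 (le_of_lt h)⟩

lemma rankIn_add_compl (X : Finset (Fin k)) (p : Fin k) :
    rankIn X p + rankIn Xᶜ p = p.1 + 1 := by
  have h1 : X.filter (· ≤ p) = (Finset.Iic p).filter (· ∈ X) := by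
    ext x; simp only [Finset.mem_filter, Finset.mem_Iic]; tauto
  have h2 : Xᶜ.filter (· ≤ p) = (Finset.Iic p).filter (fun x => ¬ x ∈ X) := by
    ext x; simp only [Finset.mem_filter, Finset.mem_Iic, Finset.mem_compl]; tauto
  unfold rankIn
  rw [h1, h2, Finset.card_filter_add_card_filter_not, Fin.card_Iic]

lemma rankIn_orderEmbOfFin {l : ℕ} (X : Finset (Fin k)) (h : X.card = l) (i : Fin l) :
    rankIn X (X.orderEmbOfFin h i) = i.1 + 1 := by
  have himg : X.filter (· ≤ X.orderEmbOfFin h i) =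
      Finset.image (X.orderEmbOfFin h) (Finset.Iic i) := by
    ext x
    simp only [Finset.mem_filter, Finset.mem_image, Finset.mem_Iic]
    constructor
    · rintro ⟨hxX, hxle⟩
      have hx' : x ∈ Set.range (X.orderEmbOfFin h) := by
        rw [Finset.range_orderEmbOfFin]; exact hxX
      obtain ⟨j, rfl⟩ := hx'
      exact ⟨j, (X.orderEmbOfFin h).le_iff_le.mp hxle, rfl⟩
    · rintro ⟨j, hj, rfl⟩
      exact ⟨Finset.orderEmbOfFin_mem X h j, (X.orderEmbOfFin h).le_iff_le.mpr hj⟩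
  unfold rankIn
  rw [himg, Finset.card_image_of_injective _ (X.orderEmbOfFin h).injective, Fin.card_Iic]

lemma orderEmbOfFin_le_iff {l : ℕ} (X : Finset (Fin k)) (h : X.card = l) (i : Fin l)
    (p : Fin k) : X.orderEmbOfFin h i ≤ p ↔ i.1 + 1 ≤ rankIn X p := by
  constructor
  · intro hle
    calc i.1 + 1 = rankIn X (X.orderEmbOfFin h i) := (rankIn_orderEmbOfFin X h i).symm
      _ ≤ rankIn X p := rankIn_mono X hle
  · intro hrank
    by_contra hcon
    push_neg at hcon
    have hsub : X.filter (· ≤ p) ⊆ (X.filter (· ≤ X.orderEmbOfFin h i)).erase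
        (X.orderEmbOfFin h i) := by
      intro x hx
      rw [Finset.mem_filter] at hx
      rw [Finset.mem_erase, Finset.mem_filter]
      refine ⟨?_, hx.1, le_of_lt (lt_of_le_of_lt hx.2 hcon)⟩
      intro hcon2
      rw [hcon2] at hx
      exact absurd hcon (not_lt.mpr hx.2)
    have := Finset.card_le_card hsub
    have hmem : X.orderEmbOfFin h i ∈ X.filter (fun x => x ≤ X.orderEmbOfFin h i) :=
      Finset.mem_filter.mpr ⟨Finset.orderEmbOfFin_mem X h i, le_refl _⟩
    rw [Finset.card_erase_of_mem hmem] at this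
    have h2 := rankIn_orderEmbOfFin X h i
    have h3 : rankIn X p ≤ rankIn X (X.orderEmbOfFin h i) - 1 := this
    omega

lemma orderEmbOfFin_rankIn {l : ℕ} (X : Finset (Fin k)) (h : X.card = l) {p : Fin k}
    (hp : p ∈ X) :
    X.orderEmbOfFin h ⟨rankIn X p - 1, by
      have h1 := one_le_rankIn X hp
      have h2 := (rankIn_le_card X p).trans_eq h
      omega⟩ = p := by
  set i : Fin l := ⟨rankIn X p - 1, by
      have h1 := one_le_rankIn X hp
      have h2 := (rankIn_le_card X p).trans_eq h
      omega⟩ with hi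
  have h1 := one_le_rankIn X hp
  have hrank := rankIn_orderEmbOfFin X h i
  rcases lt_trichotomy (X.orderEmbOfFin h i) p with hlt | heq | hgt
  · have := rankIn_lt_of_mem X hp hlt
    rw [hrank] at this
    simp only [hi] at this
    omega
  · exact heq
  · have := rankIn_lt_of_mem X (Finset.orderEmbOfFin_mem X h i) hgt
    rw [hrank] at this
    simp only [hi] at this
    omega

end rank

end Stmt10Aux

namespace Stmt10Aux

/-! #### Bridge: cut stability implies upper stability -/

section bridge

variable {l m : ℕ}

lemma OPP_refl : OrderPreservingPerm (Equiv.refl (Fin (l + m))) := by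
  constructor
  · intro a b hab
    have h1 : a.1 < b.1 := hab
    simp only [Equiv.refl_apply, Fin.lt_def, Fin.coe_castAdd]
    exact h1
  · intro a b hab
    have h1 : a.1 < b.1 := hab
    simp only [Equiv.refl_apply, Fin.lt_def, Fin.coe_natAdd]
    omega

/-- The cut determined by an order-preserving permutation. -/
def permCut (π : Equiv.Perm (Fin (l + m))) : Finset (Fin (l + m)) :=
  Finset.image (fun i : Fin l => π (Fin.castAdd m i)) Finset.univ

lemma permCut_card (π : Equiv.Perm (Fin (l + m))) (hπ : OrderPreservingPerm π) :
    (permCut π).card = l := by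
  rw [permCut, Finset.card_image_of_injective _ hπ.1.injective, Finset.card_univ,
    Fintype.card_fin]

lemma permCut_compl (π : Equiv.Perm (Fin (l + m))) :
    (permCut π)ᶜ = Finset.image (fun j : Fin m => π (Fin.natAdd l j)) Finset.univ := by
  ext x
  simp only [Finset.mem_compl, permCut, Finset.mem_image, Finset.mem_univ, true_and]
  constructor
  · intro hx
    set y := π.symm x with hy
    have hxy : π y = x := π.apply_symm_apply x
    rcases Nat.lt_or_ge y.1 l with h | h
    · exfalso
      apply hx
      refine ⟨⟨y.1, h⟩, ?_⟩
      rw [show Fin.castAdd m (⟨y.1, h⟩ : Fin l) = y from Fin.ext rfl]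
      exact hxy
    · have hyl := y.isLt
      refine ⟨⟨y.1 - l, by omega⟩, ?_⟩
      have hy2 : Fin.natAdd l (⟨y.1 - l, by omega⟩ : Fin m) = y := by
        rw [Fin.ext_iff]
        simp only [Fin.coe_natAdd]
        omega
      rw [hy2]
      exact hxy
  · rintro ⟨j, rfl⟩ ⟨i, hi⟩
    have := π.injective hi
    have h1 : (Fin.castAdd m i).1 = (Fin.natAdd l j).1 := by rw [this]
    simp only [Fin.coe_castAdd, Fin.coe_natAdd] at h1
    omega

lemma permCut_orderEmb (π : Equiv.Perm (Fin (l + m))) (hπ : OrderPreservingPerm π) :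
    (fun i : Fin l => π (Fin.castAdd m i)) =
      (permCut π).orderEmbOfFin (permCut_card π hπ) := by
  apply Finset.orderEmbOfFin_unique
  · intro i
    exact Finset.mem_image.mpr ⟨i, Finset.mem_univ i, rfl⟩
  · exact hπ.1

lemma permCut_compl_orderEmb (π : Equiv.Perm (Fin (l + m))) (hπ : OrderPreservingPerm π) :
    (fun j : Fin m => π (Fin.natAdd l j)) =
      (permCut π)ᶜ.orderEmbOfFin (compl_card _ (permCut_card π hπ)) := by
  apply Finset.orderEmbOfFin_unique
  · intro j
    rw [permCut_compl]
    exact Finset.mem_image.mpr ⟨j, Finset.mem_univ j, rfl⟩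
  · exact hπ.2

lemma permDistSet_eq_cutDistSet {M : Type*} [MetricSpace M]
    (f : (Fin l → ℕ) → M) (g : (Fin m → ℕ) → M) (L : Set ℕ)
    (π : Equiv.Perm (Fin (l + m))) (hπ : OrderPreservingPerm π) :
    permDistSet f g L π = cutDistSet f g L (permCut π) (permCut_card π hπ) := by
  unfold permDistSet cutDistSet
  ext d
  constructor
  · rintro ⟨n, hmono, hmem, rfl⟩
    refine ⟨n, hmono, hmem, ?_⟩
    unfold subTuple
    rw [← permCut_orderEmb π hπ, ← permCut_compl_orderEmb π hπ]
  · rintro ⟨n, hmono, hmem, rfl⟩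
    refine ⟨n, hmono, hmem, ?_⟩
    unfold subTuple
    rw [← permCut_orderEmb π hπ, ← permCut_compl_orderEmb π hπ]

lemma cutDistSet_proof_irrel {M : Type*} [MetricSpace M]
    (f : (Fin l → ℕ) → M) (g : (Fin m → ℕ) → M) (L : Set ℕ)
    (P : Finset (Fin (l + m))) (h1 h2 : P.card = l) :
    cutDistSet f g L P h1 = cutDistSet f g L P h2 := rfl

lemma cut_to_upper {M : Type*} [MetricSpace M] {C : ℝ} (h : CutStableWith M C) :
    UpperStableWith M C := by
  intro l m f g hf hg L hL π hπ
  rw [permDistSet_eq_cutDistSet f g L (Equiv.refl _) OPP_refl,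
    permDistSet_eq_cutDistSet f g L π hπ]
  exact h l m f g hf hg L hL _ _ (permCut_card _ OPP_refl) (permCut_card π hπ)

end bridge

end Stmt10Aux

namespace Stmt10Aux

/-! #### Upper stability implies property Q -/

section dir4

variable {M : Type*} [MetricSpace M]

/-- The alternating permutation of `Fin (k + k)`. -/
noncomputable def altp (k : ℕ) : Equiv.Perm (Fin (k + k)) :=
  Equiv.ofBijective
    (fun p : Fin (k + k) => if h : p.1 < k then (⟨2 * p.1, by omega⟩ : Fin (k + k))
      else ⟨2 * (p.1 - k) + 1, by have := p.isLt; omega⟩)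
    (Finite.injective_iff_bijective.mp (by
      intro p q hpq
      have hp := p.isLt
      have hq := q.isLt
      dsimp only at hpq
      rw [Fin.ext_iff]
      split_ifs at hpq with h1 h2 h2 <;> rw [Fin.ext_iff] at hpq <;>
        simp only at hpq <;> omega))

lemma altp_castAdd (k : ℕ) (i : Fin k) : (altp k (Fin.castAdd k i)).1 = 2 * i.1 := by
  unfold altp
  rw [Equiv.ofBijective_apply, dif_pos (show (Fin.castAdd k i).1 < k from i.isLt)]
  simp [Fin.coe_castAdd]

lemma altp_natAdd (k : ℕ) (j : Fin k) : (altp k (Fin.natAdd k j)).1 = 2 * j.1 + 1 := by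
  unfold altp
  rw [Equiv.ofBijective_apply, dif_neg (show ¬ (Fin.natAdd k j).1 < k by
    simp only [Fin.coe_natAdd]; omega)]
  simp only [Fin.coe_natAdd]
  omega

lemma altp_OPP (k : ℕ) : OrderPreservingPerm (altp k) := by
  constructor
  · intro a b hab
    have h1 : a.1 < b.1 := hab
    rw [Fin.lt_def, altp_castAdd, altp_castAdd]
    omega
  · intro a b hab
    have h1 : a.1 < b.1 := hab
    rw [Fin.lt_def, altp_natAdd, altp_natAdd]
    omega

/-- Extension of a map on increasing tuples to all tuples. -/
noncomputable def extMap {k : ℕ} (f : IncTuple k → M) : (Fin k → ℕ) → M := fun v =>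
  if h : StrictMono v then f ⟨v, h⟩ else f ⟨fun i => i.1, fun a b hab => hab⟩

lemma extMap_eq {k : ℕ} (f : IncTuple k → M) (v : Fin k → ℕ) (h : StrictMono v) :
    extMap f v = f ⟨v, h⟩ := dif_pos h

lemma extMap_dist_le {k : ℕ} (f : IncTuple k → M) (K : ℝ)
    (hK : 0 ≤ K) (hf : ∀ a b, dist (f a) (f b) ≤ K * dI a b)
    (x y : Fin k → ℕ) : dist (extMap f x) (extMap f y) ≤ K * (2 * k) := by
  have key : ∀ a b : IncTuple k, dist (f a) (f b) ≤ K * (2 * k) := by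
    intro a b
    calc dist (f a) (f b) ≤ K * dI a b := hf a b
      _ ≤ K * (2 * k) := by
          apply mul_le_mul_of_nonneg_left _ hK
          exact_mod_cast dI_le_two_k a b
  unfold extMap
  split_ifs <;> apply key

lemma extMap_bdd {k : ℕ} (f : IncTuple k → M) (K : ℝ)
    (hK : 0 ≤ K) (hf : ∀ a b, dist (f a) (f b) ≤ K * dI a b) :
    IsBddMap (extMap f) :=
  ⟨K * (2 * k), extMap_dist_le f K hK hf⟩

theorem upper_to_Q (C : ℝ) (hC : 0 ≤ C) (hU : UpperStableWith M C) :
    HasPropQConst M (2 * C + 4) := by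
  intro k f K hK hf
  rcases Nat.eq_zero_or_pos k with hk | hk
  · subst hk
    refine ⟨Set.univ, Set.infinite_univ, fun m n _ _ => ?_⟩
    rw [Subsingleton.elim m n, dist_self]
    positivity
  rcases eq_or_lt_of_le hK with hK0 | hKpos
  · refine ⟨Set.univ, Set.infinite_univ, fun m n _ _ => ?_⟩
    calc dist (f m) (f n) ≤ K * dI m n := hf m n
      _ = (0:ℝ) * dI m n := by rw [← hK0]
      _ = (2*C+4) * 0 := by ring
      _ = (2*C+4) * K := by rw [← hK0]
  -- global bound on distances
  have dist_f_le : ∀ a b : IncTuple k, dist (f a) (f b) ≤ K * (2 * k) := by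
    intro a b
    calc dist (f a) (f b) ≤ K * dI a b := hf a b
      _ ≤ K * (2 * k) := by
          apply mul_le_mul_of_nonneg_left _ hK
          exact_mod_cast dI_le_two_k a b
  -- Ramsey coloring
  set dd : (Fin (k + k) → ℕ) → ℝ := fun v =>
    dist (extMap f (fun i : Fin k => v (Fin.castAdd k i)))
      (extMap f (fun j : Fin k => v (Fin.natAdd k j))) with hdd
  set F : (Fin (k + k) → ℕ) → Fin (2*k+1) := fun v =>
    ⟨min (Nat.floor (dd v / K)) (2*k), Nat.lt_succ_of_le (min_le_right _ _)⟩ with hF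
  obtain ⟨L, _, hLinf, c0, hc0⟩ := ramseyInf (2*k) (k+k) F Set.univ Set.infinite_univ
  -- dd is bounded by 2kK
  have hdd_le : ∀ v, dd v ≤ K * (2*k) := by
    intro v
    rw [hdd]
    exact extMap_dist_le f K hK hf _ _
  have hfloor_le : ∀ v, Nat.floor (dd v / K) ≤ 2*k := by
    intro v
    have h1 : dd v / K ≤ ((2*k : ℕ) : ℝ) := by
      rw [div_le_iff₀ hKpos]
      push_cast
      calc dd v ≤ K * (2*k) := hdd_le v
        _ = 2 * (k:ℝ) * K := by ring
    calc Nat.floor (dd v / K) ≤ Nat.floor ((2*k : ℕ) : ℝ) := Nat.floor_le_floor h1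
      _ = 2*k := Nat.floor_natCast _
  -- any two dd-values of tuples in L are within K
  have hclose : ∀ v w : Fin (k+k) → ℕ, StrictMono v → StrictMono w →
      (∀ i, v i ∈ L) → (∀ i, w i ∈ L) → dd v ≤ dd w + K := by
    intro v w hv hw hvL hwL
    have h1 : F v = F w := (hc0 v hv hvL).trans (hc0 w hw hwL).symm
    rw [hF] at h1
    simp only [Fin.mk.injEq] at h1
    rw [min_eq_left (hfloor_le v), min_eq_left (hfloor_le w)] at h1
    have hw0 : (0:ℝ) ≤ dd w / K := div_nonneg dist_nonneg (le_of_lt hKpos)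
    have h2 : dd v / K < Nat.floor (dd v / K) + 1 := Nat.lt_floor_add_one _
    have h3 : (Nat.floor (dd w / K) : ℝ) ≤ dd w / K := Nat.floor_le hw0
    rw [h1] at h2
    have h5 : dd v / K < dd w / K + 1 := by linarith
    have h6 : dd v < (dd w / K + 1) * K := (div_lt_iff₀ hKpos).mp h5
    have h7 : (dd w / K + 1) * K = dd w + K := by field_simp
    linarith
  -- apply upper stability
  have hBdd := extMap_bdd f K hK hf
  have hineq := hU k k (extMap f) (extMap f) hBdd hBdd L hLinf (altp k) (altp_OPP k)
  -- the sup over the alternating pattern is at most K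
  have hsup : sSup (permDistSet (extMap f) (extMap f) L (altp k)) ≤ K := by
    apply Real.sSup_le _ hK
    rintro d ⟨n, hmono, hmem, rfl⟩
    have hu : StrictMono (fun i : Fin k => n (altp k (Fin.castAdd k i))) :=
      hmono.comp (altp_OPP k).1
    have hv : StrictMono (fun j : Fin k => n (altp k (Fin.natAdd k j))) :=
      hmono.comp (altp_OPP k).2
    rw [extMap_eq f _ hu, extMap_eq f _ hv]
    set u : IncTuple k := ⟨_, hu⟩
    set v : IncTuple k := ⟨_, hv⟩
    have hadj : (interGraph k).Adj u v := by
      show _ ≠ _ ∧ Interlacing _ _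
      constructor
      · intro hcon
        have h0 : u.1 ⟨0, hk⟩ = v.1 ⟨0, hk⟩ := by rw [hcon]
        have hlt : u.1 ⟨0, hk⟩ < v.1 ⟨0, hk⟩ := by
          apply hmono
          rw [Fin.lt_def, altp_castAdd, altp_natAdd]
          show 2 * (0:ℕ) < 2 * 0 + 1
          omega
        omega
      · left
        constructor
        · intro i
          apply le_of_lt
          apply hmono
          rw [Fin.lt_def, altp_castAdd, altp_natAdd]
          omega
        · intro i hik
          apply le_of_lt
          apply hmono
          rw [Fin.lt_def, altp_natAdd, altp_castAdd]
          show 2 * ((⟨i, Nat.lt_of_succ_lt hik⟩ : Fin k) : ℕ) + 1 <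
            2 * ((⟨i + 1, hik⟩ : Fin k) : ℕ)
          simp only [Fin.val_mk]
          omega
    have hdI : (dI u v : ℝ) ≤ 1 := by
      have h1 : (interGraph k).dist u v ≤
          (SimpleGraph.Walk.cons hadj SimpleGraph.Walk.nil).length :=
        SimpleGraph.dist_le _
      simp only [SimpleGraph.Walk.length_cons, SimpleGraph.Walk.length_nil] at h1
      unfold dI
      exact_mod_cast h1
    calc dist (f u) (f v) ≤ K * dI u v := hf u v
      _ ≤ K * 1 := mul_le_mul_of_nonneg_left hdI hK
      _ = K := mul_one K
  -- refl set facts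
  set S0 := permDistSet (extMap f) (extMap f) L (Equiv.refl (Fin (k+k))) with hS0
  have hS0ne : S0.Nonempty := by
    obtain ⟨v, hv, hvL, -⟩ := exists_inc (k+k) 0 L hLinf
    exact ⟨_, v, hv, hvL, rfl⟩
  have hS0bd : BddBelow S0 := ⟨0, by rintro d ⟨n, hmono, hmem, rfl⟩; exact dist_nonneg⟩
  have hsInf : sInf S0 ≤ C * K :=
    le_trans hineq (mul_le_mul_of_nonneg_left hsup hC)
  -- every element of the refl set is at most (C+2)K
  have hS0el : ∀ d ∈ S0, d ≤ (C + 2) * K := by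
    intro d hd
    obtain ⟨d', hd', hd'lt⟩ := (csInf_lt_iff hS0bd hS0ne).mp
      (show sInf S0 < sInf S0 + K by linarith)
    obtain ⟨n, hmono, hmem, rfl⟩ := hd
    obtain ⟨n', hmono', hmem', rfl⟩ := hd'
    have h1 : dd n ≤ dd n' + K := hclose n n' hmono hmono' hmem hmem'
    have h2 : dd n' < sInf S0 + K := hd'lt
    show dd n ≤ (C + 2) * K
    have h3 : (C + 2) * K = C * K + 2 * K := by ring
    rw [h3]
    linarith
  -- conclusion
  refine ⟨L, hLinf, ?_⟩
  intro a b ha hb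
  set N := (Finset.univ.sup a.1) ⊔ (Finset.univ.sup b.1) with hN
  obtain ⟨w, hwmono, hwL, hwgt⟩ := exists_inc k N L hLinf
  have haw : ∀ i j, a.1 i < w j := by
    intro i j
    have h1 : a.1 i ≤ N := le_trans (Finset.le_sup (Finset.mem_univ i)) le_sup_left
    exact lt_of_le_of_lt h1 (hwgt j)
  have hbw : ∀ i j, b.1 i < w j := by
    intro i j
    have h1 : b.1 i ≤ N := le_trans (Finset.le_sup (Finset.mem_univ i)) le_sup_right
    exact lt_of_le_of_lt h1 (hwgt j)
  -- combine a tuple with w into a (k+k)-tuple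
  have hcomb : ∀ (y : IncTuple k), memAll L y → (∀ i j, y.1 i < w j) →
      dist (f y) (f ⟨w, hwmono⟩) ≤ (C + 2) * K := by
    intro y hyL hyw
    set v1 : Fin (k+k) → ℕ := fun i =>
      if h : i.1 < k then y.1 ⟨i.1, h⟩ else w ⟨i.1 - k, by have := i.isLt; omega⟩ with hv1
    have hv1_lt : ∀ (i : Fin (k+k)) (h : i.1 < k), v1 i = y.1 ⟨i.1, h⟩ :=
      fun i h => dif_pos h
    have hv1_ge : ∀ (i : Fin (k+k)) (h : ¬ i.1 < k),
        v1 i = w ⟨i.1 - k, by have := i.isLt; omega⟩ :=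
      fun i h => dif_neg h
    have hv1mono : StrictMono v1 := by
      intro p q hpq
      have hq := q.isLt
      have hpq' : p.1 < q.1 := hpq
      rcases Nat.lt_or_ge p.1 k with h1 | h1
      · rcases Nat.lt_or_ge q.1 k with h2 | h2
        · rw [hv1_lt p h1, hv1_lt q h2]
          exact y.2 (show (⟨p.1, h1⟩ : Fin k) < ⟨q.1, h2⟩ from hpq')
        · rw [hv1_lt p h1, hv1_ge q (by omega)]
          exact hyw _ _
      · have h2 : ¬ q.1 < k := by omega
        rw [hv1_ge p (by omega), hv1_ge q h2]
        apply hwmono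
        show p.1 - k < q.1 - k
        omega
    have hv1L : ∀ i, v1 i ∈ L := by
      intro i
      rcases Nat.lt_or_ge i.1 k with h1 | h1
      · rw [hv1_lt i h1]; exact hyL _
      · rw [hv1_ge i (by omega)]; exact hwL _
    have hcast : (fun i : Fin k => v1 (Fin.castAdd k i)) = y.1 := by
      funext i
      rw [hv1_lt (Fin.castAdd k i) i.isLt]
      exact congrArg y.1 (Fin.ext (by simp [Fin.coe_castAdd]))
    have hnat : (fun j : Fin k => v1 (Fin.natAdd k j)) = w := by
      funext j
      rw [hv1_ge (Fin.natAdd k j) (by simp only [Fin.coe_natAdd]; omega)]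
      apply congrArg w
      rw [Fin.ext_iff]
      simp only [Fin.coe_natAdd]
      omega
    have hd1 : dd v1 ∈ S0 := ⟨v1, hv1mono, hv1L, rfl⟩
    have h10 : dd v1 ≤ (C+2)*K := hS0el _ hd1
    have h11 : dd v1 = dist (f y) (f ⟨w, hwmono⟩) := by
      simp only [hdd]
      rw [hcast, hnat, extMap_eq f y.1 y.2, extMap_eq f w hwmono]
      rfl
    rw [h11] at h10
    exact h10
  calc dist (f a) (f b)
      ≤ dist (f a) (f ⟨w, hwmono⟩) + dist (f ⟨w, hwmono⟩) (f b) := dist_triangle _ _ _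
    _ = dist (f a) (f ⟨w, hwmono⟩) + dist (f b) (f ⟨w, hwmono⟩) := by
        rw [dist_comm (f ⟨w, hwmono⟩)]
    _ ≤ (C + 2) * K + (C + 2) * K := add_le_add (hcomb a ha haw) (hcomb b hb hbw)
    _ = (2 * C + 4) * K := by ring

end dir4

end Stmt10Aux

namespace Stmt10Aux

/-! #### Property Q implies cut stability -/

section dir1

variable {M : Type*} [MetricSpace M]

theorem Q_to_cut (C : ℝ) (hC : 0 ≤ C) (hQ : HasPropQConst M C) :
    CutStableWith M (2*C+1) := by
  intro l m f g hf hg L₀ hL₀ P Q hP hQc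
  -- enumeration of L₀
  set e : ℕ → ℕ := Nat.nth (· ∈ L₀) with he
  have he_mono : StrictMono e := Nat.nth_strictMono hL₀
  have he_mem : ∀ i, e i ∈ L₀ := fun i => Nat.nth_mem_of_infinite hL₀ i
  -- the sup side
  set SQ := cutDistSet f g L₀ Q hQc with hSQdef
  set S := sSup SQ with hSdef
  obtain ⟨Rf, hRf⟩ := hf
  obtain ⟨Rg, hRg⟩ := hg
  have hSQbdd : BddAbove SQ := by
    refine ⟨Rf + dist (f (fun _ => 0)) (g (fun _ => 0)) + Rg, ?_⟩
    rintro d ⟨n, hmono, hmem, rfl⟩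
    calc dist (f (subTuple n Q hQc)) (g (subTuple n Qᶜ (compl_card Q hQc)))
        ≤ dist (f (subTuple n Q hQc)) (f (fun _ => 0)) +
          dist (f (fun _ => 0)) (g (subTuple n Qᶜ (compl_card Q hQc))) := dist_triangle _ _ _
      _ ≤ dist (f (subTuple n Q hQc)) (f (fun _ => 0)) +
          (dist (f (fun _ => 0)) (g (fun _ => 0)) +
            dist (g (fun _ => 0)) (g (subTuple n Qᶜ (compl_card Q hQc)))) :=
          add_le_add_right (dist_triangle _ _ _) _
      _ ≤ Rf + (dist (f (fun _ => 0)) (g (fun _ => 0)) + Rg) :=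
          add_le_add (hRf _ _) (add_le_add_right (hRg _ _) _)
      _ = Rf + dist (f (fun _ => 0)) (g (fun _ => 0)) + Rg := by ring
  have he_tuple_mono : StrictMono (fun i : Fin (l+m) => e i.1) := by
    intro p q hpq
    exact he_mono (show p.1 < q.1 from hpq)
  have hSQne : SQ.Nonempty :=
    ⟨_, fun i : Fin (l+m) => e i.1, he_tuple_mono, fun i => he_mem _, rfl⟩
  have hub : ∀ d ∈ SQ, d ≤ S := fun d hd => le_csSup hSQbdd hd
  have hS0 : 0 ≤ S := by
    obtain ⟨d, hd⟩ := hSQne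
    have h1 := hub d hd
    obtain ⟨n, hmono, hmem, rfl⟩ := hd
    exact le_trans dist_nonneg h1
  -- the subtuple embeddings
  set Qemb := Q.orderEmbOfFin hQc with hQembdef
  set Pemb := P.orderEmbOfFin hP with hPembdef
  set QCemb := Qᶜ.orderEmbOfFin (compl_card Q hQc) with hQCembdef
  set PCemb := Pᶜ.orderEmbOfFin (compl_card P hP) with hPCembdef
  -- the concentration map
  set h : IncTuple (l+m) → M := fun y => f (fun i => e (2 * y.1 (Qemb i))) with hhdef
  -- key membership estimate
  have key : ∀ a b : Fin (l+m) → ℕ, StrictMono a → StrictMono b →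
      (∀ p p' : Fin (l+m), p.1 < p'.1 → b p ≤ a p') →
      (∀ p p' : Fin (l+m), p.1 < p'.1 → a p < b p') →
      dist (f (fun i => e (2 * b (Qemb i)))) (g (fun j => e (2 * a (QCemb j) + 1))) ≤ S := by
    intro a b ha hb hba hab
    apply hub
    set nf : Fin (l+m) → ℕ := fun p => if p ∈ Q then e (2 * b p) else e (2 * a p + 1) with hnf
    have hnf_mono : StrictMono nf := by
      intro p p' hpp'
      have hpp'' : p.1 < p'.1 := hpp'
      rw [hnf]
      simp only []
      split_ifs with h1 h2 h2
      · exact he_mono (by have := hb hpp'; omega)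
      · apply he_mono
        have := hba p p' hpp''
        omega
      · apply he_mono
        have := hab p p' hpp''
        omega
      · apply he_mono
        have := ha hpp'
        omega
    have hnf_mem : ∀ p, nf p ∈ L₀ := by
      intro p
      rw [hnf]
      simp only []
      split_ifs <;> exact he_mem _
    refine ⟨nf, hnf_mono, hnf_mem, ?_⟩
    have h1 : subTuple nf Q hQc = fun i => e (2 * b (Qemb i)) := by
      funext i
      show nf (Qemb i) = _
      rw [hnf]
      simp only []
      rw [if_pos (Finset.orderEmbOfFin_mem Q hQc i)]
    have h2 : subTuple nf Qᶜ (compl_card Q hQc) = fun j => e (2 * a (QCemb j) + 1) := by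
      funext j
      show nf (QCemb j) = _
      rw [hnf]
      simp only []
      rw [if_neg (Finset.mem_compl.mp (Finset.orderEmbOfFin_mem Qᶜ (compl_card Q hQc) j))]
    rw [h1, h2]
  -- adjacency bound for h
  have hadjb : ∀ a b : IncTuple (l+m), (interGraph (l+m)).Adj a b → dist (h a) (h b) ≤ 2 * S := by
    have main : ∀ u v : IncTuple (l+m), InterLE u.1 v.1 → dist (h u) (h v) ≤ 2 * S := by
      intro u v huv
      have cross1 : ∀ p p' : Fin (l+m), p.1 < p'.1 → v.1 p ≤ u.1 p' := by
        intro p p' hpp'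
        have hlt : p.1 + 1 < (l+m) ∨ p.1 + 1 = p'.1 ∨ p.1 + 1 = (l+m) := by
          have := p'.isLt; omega
        have hp1k : p.1 + 1 < (l+m) := by have := p'.isLt; omega
        have h1 := huv.2 p.1 hp1k
        have h2 : u.1 ⟨p.1 + 1, hp1k⟩ ≤ u.1 p' := by
          apply u.2.monotone
          show p.1 + 1 ≤ p'.1
          omega
        have h3 : v.1 ⟨p.1, Nat.lt_of_succ_lt hp1k⟩ = v.1 p := by
          apply congrArg
          exact Fin.ext rfl
        omega
      have cross2 : ∀ p p' : Fin (l+m), p.1 < p'.1 → u.1 p < v.1 p' := by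
        intro p p' hpp'
        exact lt_of_le_of_lt (huv.1 p) (v.2 (show p < p' from hpp'))
      have hucross1 : ∀ p p' : Fin (l+m), p.1 < p'.1 → u.1 p ≤ u.1 p' :=
        fun p p' hpp' => le_of_lt (u.2 (show p < p' from hpp'))
      have hucross2 : ∀ p p' : Fin (l+m), p.1 < p'.1 → u.1 p < u.1 p' :=
        fun p p' hpp' => u.2 (show p < p' from hpp')
      have t1 := key u.1 u.1 u.2 u.2 hucross1 hucross2
      have t2 := key u.1 v.1 u.2 v.2 cross1 cross2
      calc dist (h u) (h v)
          ≤ dist (h u) (g (fun j => e (2 * u.1 (QCemb j) + 1))) +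
            dist (g (fun j => e (2 * u.1 (QCemb j) + 1))) (h v) := dist_triangle _ _ _
        _ ≤ S + S := by
            apply add_le_add
            · exact t1
            · rw [dist_comm]
              exact t2
        _ = 2 * S := by ring
    intro a b hab
    obtain ⟨hne, hint⟩ := (show a ≠ b ∧ Interlacing a.1 b.1 from hab)
    rcases hint with h1 | h1
    · exact main a b h1
    · rw [dist_comm]
      exact main b a h1
  -- property Q applied to h
  have hS2 : (0:ℝ) ≤ 2 * S := by linarith
  obtain ⟨L', hL'inf, hconc⟩ := hQ (l+m) h (2*S) hS2 (dist_le_mul_dI h (2*S) hS2 hadjb)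
  set r : ℕ → ℕ := Nat.nth (· ∈ L') with hrdef
  have hr_mono : StrictMono r := Nat.nth_strictMono hL'inf
  have hr_mem : ∀ i, r i ∈ L' := fun i => Nat.nth_mem_of_infinite hL'inf i
  -- the index function
  set E := ((l+m)+1)*((l+m)+2) with hEdef
  have hE2 : E = (l+m)*(l+m) + 3*(l+m) + 2 := by rw [hEdef]; ring
  set pidx : Finset (Fin (l+m)) → Fin (l+m) → ℕ := fun X p =>
    if p ∈ X then E * (rankIn Xᶜ p) + ((l+m)+1) * (rankIn X p - 1) + (l+m)
    else E * (rankIn Xᶜ p) - 1 with hpidxdef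
  have hpidx_mono : ∀ X : Finset (Fin (l+m)), StrictMono (pidx X) := by
    intro X p p' hpp'
    have hk1 : 0 < (l+m) := by have := p.isLt; omega
    have hA : rankIn Xᶜ p ≤ rankIn Xᶜ p' := rankIn_mono Xᶜ (le_of_lt hpp')
    have hB : rankIn X p ≤ rankIn X p' := rankIn_mono X (le_of_lt hpp')
    have hBk : rankIn X p' ≤ (l+m) := le_trans (rankIn_le_card X p')
      (le_trans (Finset.card_le_univ X) (by simp))
    have hEA : E * rankIn Xᶜ p ≤ E * rankIn Xᶜ p' := Nat.mul_le_mul_left E hA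
    rw [hpidxdef]
    simp only []
    by_cases h1 : p ∈ X <;> by_cases h2 : p' ∈ X
    · rw [if_pos h1, if_pos h2]
      have hBB : rankIn X p < rankIn X p' := rankIn_lt_of_mem X h2 hpp'
      have hB1 : 1 ≤ rankIn X p := one_le_rankIn X h1
      have hmul : ((l+m)+1) * (rankIn X p - 1) < ((l+m)+1) * (rankIn X p' - 1) :=
        Nat.mul_lt_mul_of_pos_left (by omega) (by omega)
      omega
    · rw [if_pos h1, if_neg h2]
      have hAA : rankIn Xᶜ p < rankIn Xᶜ p' :=
        rankIn_lt_of_mem Xᶜ (Finset.mem_compl.mpr h2) hpp'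
      have hEA2 : E * (rankIn Xᶜ p + 1) ≤ E * rankIn Xᶜ p' := Nat.mul_le_mul_left E (by omega)
      have hEA3 : E * (rankIn Xᶜ p + 1) = E * rankIn Xᶜ p + E := by ring
      have hmul : ((l+m)+1) * (rankIn X p - 1) ≤ ((l+m)+1) * (l+m) :=
        Nat.mul_le_mul_left ((l+m)+1) (by omega)
      have hkk : ((l+m)+1) * (l+m) = (l+m)*(l+m) + (l+m) := by ring
      omega
    · rw [if_neg h1, if_pos h2]
      omega
    · rw [if_neg h1, if_neg h2]
      have hAA : rankIn Xᶜ p < rankIn Xᶜ p' :=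
        rankIn_lt_of_mem Xᶜ (Finset.mem_compl.mpr h2) hpp'
      have hEA2 : E * (rankIn Xᶜ p + 1) ≤ E * rankIn Xᶜ p' := Nat.mul_le_mul_left E (by omega)
      have hEA3 : E * (rankIn Xᶜ p + 1) = E * rankIn Xᶜ p + E := by ring
      omega
  -- the complement positions have pattern-independent indices
  have hcompl : ∀ (X : Finset (Fin (l+m))) (j0 : ℕ) (hj : Xᶜ.card = j0) (j : Fin j0),
      pidx X (Xᶜ.orderEmbOfFin hj j) = E * (j.1 + 1) - 1 := by
    intro X j0 hj j
    have hmem : Xᶜ.orderEmbOfFin hj j ∈ Xᶜ := Finset.orderEmbOfFin_mem Xᶜ hj j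
    rw [hpidxdef]
    simp only []
    rw [if_neg (Finset.mem_compl.mp hmem), rankIn_orderEmbOfFin Xᶜ hj j]
  -- minimal value on pattern positions
  have hmin : ∀ (X : Finset (Fin (l+m))) (p : Fin (l+m)), p ∈ X → (l+m) ≤ pidx X p := by
    intro X p hp
    rw [hpidxdef]
    simp only []
    rw [if_pos hp]
    omega
  -- gap on consecutive pattern positions
  have hgap : ∀ (i i' : Fin l), i.1 + 1 = i'.1 →
      pidx P (Pemb i) + ((l+m)+1) ≤ pidx P (Pemb i') := by
    intro i i' hii
    have hm1 : Pemb i ∈ P := Finset.orderEmbOfFin_mem P hP i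
    have hm2 : Pemb i' ∈ P := Finset.orderEmbOfFin_mem P hP i'
    have hii' : Pemb i < Pemb i' := Pemb.strictMono (show i < i' from by
      rw [Fin.lt_def]; omega)
    have hA : rankIn Pᶜ (Pemb i) ≤ rankIn Pᶜ (Pemb i') := rankIn_mono Pᶜ (le_of_lt hii')
    have hEA : E * rankIn Pᶜ (Pemb i) ≤ E * rankIn Pᶜ (Pemb i') := Nat.mul_le_mul_left E hA
    have hr1 : rankIn P (Pemb i) = i.1 + 1 := rankIn_orderEmbOfFin P hP i
    have hr2 : rankIn P (Pemb i') = i'.1 + 1 := rankIn_orderEmbOfFin P hP i'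
    rw [hpidxdef]
    simp only []
    rw [if_pos hm1, if_pos hm2, hr1, hr2]
    have hmul : ((l+m)+1) * (i'.1 + 1 - 1) = ((l+m)+1) * (i.1 + 1 - 1) + ((l+m)+1) := by
      have : i'.1 + 1 - 1 = (i.1 + 1 - 1) + 1 := by omega
      rw [this]; ring
    omega
  -- the two pattern tuples
  set zP : Fin (l+m) → ℕ := fun p => e (2 * r (pidx P p) + (if p ∈ P then 0 else 1)) with hzPdef
  set zQ : Fin (l+m) → ℕ := fun p => e (2 * r (pidx Q p) + (if p ∈ Q then 0 else 1)) with hzQdef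
  have hz_mono : ∀ (X : Finset (Fin (l+m))),
      StrictMono (fun p => e (2 * r (pidx X p) + (if p ∈ X then 0 else 1))) := by
    intro X p p' hpp'
    apply he_mono
    have h1 : r (pidx X p) < r (pidx X p') := hr_mono (hpidx_mono X hpp')
    split_ifs <;> omega
  have hzP_mono : StrictMono zP := hz_mono P
  have hzQ_mono : StrictMono zQ := hz_mono Q
  have hzP_mem : ∀ p, zP p ∈ L₀ := fun p => he_mem _
  have hzQ_mem : ∀ p, zQ p ∈ L₀ := fun p => he_mem _
  -- the shared complement subtuple
  have hw_eq : subTuple zP Pᶜ (compl_card P hP) = subTuple zQ Qᶜ (compl_card Q hQc) := by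
    funext j
    show zP (PCemb j) = zQ (QCemb j)
    rw [hzPdef, hzQdef]
    simp only []
    rw [if_neg (Finset.mem_compl.mp (Finset.orderEmbOfFin_mem Pᶜ (compl_card P hP) j)),
      if_neg (Finset.mem_compl.mp (Finset.orderEmbOfFin_mem Qᶜ (compl_card Q hQc) j))]
    rw [show pidx P (PCemb j) = E * (j.1 + 1) - 1 from hcompl P m (compl_card P hP) j,
      show pidx Q (QCemb j) = E * (j.1 + 1) - 1 from hcompl Q m (compl_card Q hQc) j]
  -- the Q-side witness tuple
  set ybQ : IncTuple (l+m) := ⟨fun p => r (pidx Q p), fun p p' hpp' => hr_mono (hpidx_mono Q hpp')⟩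
    with hybQdef
  have hybQ_mem : memAll L' ybQ := fun p => hr_mem _
  have hybQ_val : h ybQ = f (subTuple zQ Q hQc) := by
    rw [hhdef]
    simp only []
    apply congrArg
    funext i
    show e (2 * r (pidx Q (Qemb i))) = zQ (Qemb i)
    rw [hzQdef]
    simp only []
    rw [if_pos (Finset.orderEmbOfFin_mem Q hQc i)]
    simp
  -- the P-side witness tuple (interpolation)
  have hrankQ_lt : ∀ x : Fin (l+m), rankIn Q x ≠ 0 → rankIn Q x - 1 < l := by
    intro x hx
    have h1 : rankIn Q x ≤ l := by
      have := rankIn_le_card Q x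
      omega
    omega
  set sP : Fin l → ℕ := fun i => pidx P (Pemb i) with hsPdef
  have hsP_mono : StrictMono sP := by
    intro i i' hii
    exact hpidx_mono P (Pemb.strictMono hii)
  have hsP_min : ∀ i, (l+m) ≤ sP i := by
    intro i
    rw [hsPdef]
    exact hmin P (Pemb i) (Finset.orderEmbOfFin_mem P hP i)
  have hsP_gap : ∀ (i i' : Fin l), i.1 + 1 = i'.1 → sP i + ((l+m)+1) ≤ sP i' := by
    intro i i' hii
    rw [hsPdef]
    exact hgap i i' hii
  set ybPfun : Fin (l+m) → ℕ := fun x =>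
    if h0 : rankIn Q x = 0 then r x.1
    else r (sP ⟨rankIn Q x - 1, hrankQ_lt x h0⟩ +
      (x.1 - (Qemb ⟨rankIn Q x - 1, hrankQ_lt x h0⟩).1)) with hybPdef
  have hybP_eval0 : ∀ (x : Fin (l+m)) (h0 : rankIn Q x = 0), ybPfun x = r x.1 := by
    intro x h0
    rw [hybPdef]
    exact dif_pos h0
  have hybP_eval1 : ∀ (x : Fin (l+m)) (h0 : ¬ rankIn Q x = 0), ybPfun x =
      r (sP ⟨rankIn Q x - 1, hrankQ_lt x h0⟩ +
        (x.1 - (Qemb ⟨rankIn Q x - 1, hrankQ_lt x h0⟩).1)) := by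
    intro x h0
    rw [hybPdef]
    exact dif_neg h0
  -- the anchor position is below x
  have hqle : ∀ (x : Fin (l+m)) (h0 : ¬ rankIn Q x = 0),
      (Qemb ⟨rankIn Q x - 1, hrankQ_lt x h0⟩).1 ≤ x.1 := by
    intro x h0
    have h1 : rankIn Q x - 1 + 1 ≤ rankIn Q x := by omega
    exact (orderEmbOfFin_le_iff Q hQc ⟨rankIn Q x - 1, hrankQ_lt x h0⟩ x).mpr h1
  -- the anchor equalities
  have hanchor : ∀ i : Fin l, ybPfun (Qemb i) = r (sP i) := by
    intro i
    have hrq : rankIn Q (Qemb i) = i.1 + 1 := rankIn_orderEmbOfFin Q hQc i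
    have hne : ¬ rankIn Q (Qemb i) = 0 := by omega
    rw [hybP_eval1 (Qemb i) hne]
    apply congrArg r
    have hjj : (⟨rankIn Q (Qemb i) - 1, hrankQ_lt (Qemb i) hne⟩ : Fin l) = i :=
      Fin.ext (by show rankIn Q (Qemb i) - 1 = i.1; omega)
    have e1 : sP ⟨rankIn Q (Qemb i) - 1, hrankQ_lt (Qemb i) hne⟩ = sP i := congrArg sP hjj
    have e2 : (Qemb ⟨rankIn Q (Qemb i) - 1, hrankQ_lt (Qemb i) hne⟩).1 = (Qemb i).1 :=
      congrArg (fun z => (Qemb z).1) hjj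
    omega
  -- strict monotonicity of the interpolation
  have hybP_mono : StrictMono ybPfun := by
    intro x x' hxx'
    have hxx'' : x.1 < x'.1 := hxx'
    have htle : rankIn Q x ≤ rankIn Q x' := rankIn_mono Q (le_of_lt hxx')
    have hxk : x.1 < l + m := x.isLt
    rcases Nat.eq_zero_or_pos (rankIn Q x') with ht' | ht'
    · have ht : rankIn Q x = 0 := by omega
      rw [hybP_eval0 x ht, hybP_eval0 x' ht']
      exact hr_mono hxx''
    · have hne' : ¬ rankIn Q x' = 0 := by omega
      rcases Nat.eq_zero_or_pos (rankIn Q x) with ht | ht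
      · rw [hybP_eval0 x ht, hybP_eval1 x' hne']
        apply hr_mono
        have h2 := hsP_min ⟨rankIn Q x' - 1, hrankQ_lt x' hne'⟩
        omega
      · have hne : ¬ rankIn Q x = 0 := by omega
        rw [hybP_eval1 x hne, hybP_eval1 x' hne']
        apply hr_mono
        rcases Nat.lt_or_ge (rankIn Q x) (rankIn Q x') with hlt | hge
        · -- t < t'
          have hmidlt : rankIn Q x < l := by
            have := hrankQ_lt x' hne'
            omega
          have hcons : sP ⟨rankIn Q x - 1, hrankQ_lt x hne⟩ + ((l+m)+1) ≤
              sP ⟨rankIn Q x, hmidlt⟩ :=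
            hsP_gap _ _ (by show rankIn Q x - 1 + 1 = rankIn Q x; omega)
          have hmono2 : sP ⟨rankIn Q x, hmidlt⟩ ≤
              sP ⟨rankIn Q x' - 1, hrankQ_lt x' hne'⟩ := by
            rcases Nat.lt_or_ge (rankIn Q x) (rankIn Q x' - 1) with hc | hc
            · exact le_of_lt (hsP_mono (show (⟨rankIn Q x, hmidlt⟩ : Fin l) <
                ⟨rankIn Q x' - 1, hrankQ_lt x' hne'⟩ from hc))
            · have hcc : (⟨rankIn Q x, hmidlt⟩ : Fin l) =
                  ⟨rankIn Q x' - 1, hrankQ_lt x' hne'⟩ :=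
                Fin.ext (by show rankIn Q x = rankIn Q x' - 1; omega)
              exact le_of_eq (congrArg sP hcc)
          omega
        · -- t = t'
          have hjj : (⟨rankIn Q x' - 1, hrankQ_lt x' hne'⟩ : Fin l) =
              ⟨rankIn Q x - 1, hrankQ_lt x hne⟩ :=
            Fin.ext (by show rankIn Q x' - 1 = rankIn Q x - 1; omega)
          have e1 : sP ⟨rankIn Q x' - 1, hrankQ_lt x' hne'⟩ =
              sP ⟨rankIn Q x - 1, hrankQ_lt x hne⟩ := congrArg sP hjj
          have e2 : (Qemb ⟨rankIn Q x' - 1, hrankQ_lt x' hne'⟩).1 =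
              (Qemb ⟨rankIn Q x - 1, hrankQ_lt x hne⟩).1 :=
            congrArg (fun z => (Qemb z).1) hjj
          have hq := hqle x hne
          omega
  set ybP : IncTuple (l+m) := ⟨ybPfun, hybP_mono⟩ with hybPdef2
  have hybP_mem : memAll L' ybP := by
    intro p
    show ybPfun p ∈ L'
    rcases Nat.eq_zero_or_pos (rankIn Q p) with h0 | h0
    · rw [hybP_eval0 p h0]; exact hr_mem _
    · rw [hybP_eval1 p (by omega)]; exact hr_mem _
  have hybP_val : h ybP = f (subTuple zP P hP) := by
    rw [hhdef]
    simp only []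
    apply congrArg
    funext i
    show e (2 * ybPfun (Qemb i)) = zP (Pemb i)
    rw [hanchor i, hzPdef]
    simp only []
    rw [if_pos (Finset.orderEmbOfFin_mem P hP i), hsPdef]
    simp
  -- assembling the estimate
  have hQel : dist (f (subTuple zQ Q hQc)) (g (subTuple zQ Qᶜ (compl_card Q hQc))) ≤ S :=
    hub _ ⟨zQ, hzQ_mono, hzQ_mem, rfl⟩
  have hconc2 : dist (h ybP) (h ybQ) ≤ C * (2*S) := hconc ybP ybQ hybP_mem hybQ_mem
  have hPel : sInf (cutDistSet f g L₀ P hP) ≤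
      dist (f (subTuple zP P hP)) (g (subTuple zP Pᶜ (compl_card P hP))) := by
    apply csInf_le
    · refine ⟨0, ?_⟩
      rintro d ⟨n, hmono, hmem, rfl⟩
      exact dist_nonneg
    · exact ⟨zP, hzP_mono, hzP_mem, rfl⟩
  calc sInf (cutDistSet f g L₀ P hP)
      ≤ dist (f (subTuple zP P hP)) (g (subTuple zP Pᶜ (compl_card P hP))) := hPel
    _ ≤ dist (f (subTuple zP P hP)) (f (subTuple zQ Q hQc)) +
        dist (f (subTuple zQ Q hQc)) (g (subTuple zP Pᶜ (compl_card P hP))) :=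
        dist_triangle _ _ _
    _ = dist (h ybP) (h ybQ) +
        dist (f (subTuple zQ Q hQc)) (g (subTuple zQ Qᶜ (compl_card Q hQc))) := by
        rw [hybP_val, hybQ_val, hw_eq]
    _ ≤ C * (2*S) + S := add_le_add hconc2 hQel
    _ = (2*C+1) * S := by ring

end dir1

end Stmt10Aux

/-- Property `Q`, cut stability and upper stability are equivalent for metric spaces. -/
theorem stmt10 (M : Type*) [MetricSpace M] :
    (HasPropQ M ↔ ∃ C : ℝ, 1 ≤ C ∧ CutStableWith M C) ∧
    (HasPropQ M ↔ ∃ C : ℝ, 0 ≤ C ∧ UpperStableWith M C) := by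
  have hQcut : HasPropQ M → ∃ C : ℝ, 1 ≤ C ∧ CutStableWith M C := by
    rintro ⟨C, hC, hQC⟩
    exact ⟨2*C+1, by linarith, Stmt10Aux.Q_to_cut C hC hQC⟩
  have hcutup : (∃ C : ℝ, 1 ≤ C ∧ CutStableWith M C) →
      ∃ C : ℝ, 0 ≤ C ∧ UpperStableWith M C := by
    rintro ⟨C, hC, hcut⟩
    exact ⟨C, by linarith, Stmt10Aux.cut_to_upper hcut⟩
  have hupQ : (∃ C : ℝ, 0 ≤ C ∧ UpperStableWith M C) → HasPropQ M := by
    rintro ⟨C, hC, hup⟩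
    exact ⟨2*C+4, by linarith, Stmt10Aux.upper_to_Q C hC hup⟩
  exact ⟨⟨hQcut, fun h => hupQ (hcutup h)⟩, ⟨fun h => hcutup (hQcut h), hupQ⟩⟩
end
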